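/- arXiv:1808.03095 — 6 statements merged into one kernel-verified Lean document; each statement's English description precedes it below -/
import Mathlib

section
/- Let ρ > 0, α > 0 and 0 < a < b < ∞, and let g, h : ℝ → ℝ be continuous on [a, b]. Then ∫_a^b t^{ρ−1} g(t) (^ρI_{a+}^{α} h)(t) dt = ∫_a^b t^{ρ−1} h(t) (^ρI_{b−}^{α} g)(t) dt. -/
open MeasureTheory Real Set Filter

/-- Left-sided Katugampola fractional integral of order `α`:
`(^ρI_{a+}^{α} h)(t) = (1/Γ(α)) ∫_a^t s^(ρ-1) ((t^ρ - s^ρ)/ρ)^(α-1) h(s) ds`. -/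
noncomputable def katI (ρ α a : ℝ) (h : ℝ → ℝ) (t : ℝ) : ℝ :=
  (1 / Real.Gamma α) * ∫ s in a..t, s ^ (ρ - 1) * ((t ^ ρ - s ^ ρ) / ρ) ^ (α - 1) * h s

/-- Right-sided Katugampola fractional integral of order `α`:
`(^ρI_{b-}^{α} h)(t) = (1/Γ(α)) ∫_t^b s^(ρ-1) ((s^ρ - t^ρ)/ρ)^(α-1) h(s) ds`. -/
noncomputable def katIr (ρ α b : ℝ) (h : ℝ → ℝ) (t : ℝ) : ℝ :=
  (1 / Real.Gamma α) * ∫ s in t..b, s ^ (ρ - 1) * ((s ^ ρ - t ^ ρ) / ρ) ^ (α - 1) * h s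

/-- Left-sided Katugampola fractional derivative of order `0 < α < 1`:
`(^ρD_{a+}^{α} h)(t) = t^(ρ-1) ⬝ d/dt (^ρI_{a+}^{1-α} h)(t)`. -/
noncomputable def katD (ρ α a : ℝ) (h : ℝ → ℝ) (t : ℝ) : ℝ :=
  t ^ (ρ - 1) * deriv (katI ρ (1 - α) a h) t

/-- Right-sided Katugampola fractional derivative of order `0 < α < 1`:
`(^ρD_{b-}^{α} h)(t) = -t^(ρ-1) ⬝ d/dt (^ρI_{b-}^{1-α} h)(t)`. -/
noncomputable def katDr (ρ α b : ℝ) (h : ℝ → ℝ) (t : ℝ) : ℝ :=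
  -(t ^ (ρ - 1) * deriv (katIr ρ (1 - α) b h) t)

/-- Generalized Katugampola fractional derivative of order `0 < α < 1` and type `0 ≤ β ≤ 1`:
`(^ρD_{a+}^{α,β} h)(t) = (^ρI_{a+}^{β(1-α)} (δ_ρ (^ρI_{a+}^{(1-β)(1-α)} h)))(t)`,
where `(δ_ρ f)(t) = t^(ρ-1) f'(t)`. -/
noncomputable def katDgen (ρ α β a : ℝ) (h : ℝ → ℝ) (t : ℝ) : ℝ :=
  katI ρ (β * (1 - α)) a
    (fun s => s ^ (ρ - 1) * deriv (katI ρ ((1 - β) * (1 - α)) a h) s) t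

private lemma kernelA (ρ α a t : ℝ) (hρ : 0 < ρ) (hα : 0 < α) (ha : 0 < a) (hat : a < t) :
    IntegrableOn (fun s => s ^ (ρ - 1) * ((t ^ ρ - s ^ ρ) / ρ) ^ (α - 1)) (Ioc a t) ∧
    ∫ s in Ioc a t, s ^ (ρ - 1) * ((t ^ ρ - s ^ ρ) / ρ) ^ (α - 1)
      = ((t ^ ρ - a ^ ρ) / ρ) ^ α / α := by
  set K : ℝ → ℝ := fun s => s ^ (ρ - 1) * ((t ^ ρ - s ^ ρ) / ρ) ^ (α - 1) with hK
  set Φ : ℝ → ℝ := fun s => -(((t ^ ρ - s ^ ρ) / ρ) ^ α) / α with hΦ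
  have hderiv : ∀ s ∈ Ioo a t, HasDerivAt Φ (K s) s := by
    intro s hs
    have hs0 : 0 < s := ha.trans hs.1
    have hu : HasDerivAt (fun s : ℝ => (t ^ ρ - s ^ ρ) / ρ) (-(s ^ (ρ - 1))) s := by
      have h1 : HasDerivAt (fun s : ℝ => s ^ ρ) (ρ * s ^ (ρ - 1)) s :=
        Real.hasDerivAt_rpow_const (Or.inl hs0.ne')
      have := ((hasDerivAt_const s (t ^ ρ)).sub h1).div_const ρ
      refine this.congr_deriv ?_
      field_simp
      ring
    have hupos : 0 < (t ^ ρ - s ^ ρ) / ρ := by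
      have h' : (0:ℝ) < t ^ ρ - s ^ ρ := sub_pos.mpr (Real.rpow_lt_rpow hs0.le hs.2 hρ)
      positivity
    have h2 := hu.rpow_const (p := α) (Or.inl hupos.ne')
    have := (h2.neg).div_const α
    refine this.congr_deriv ?_
    field_simp [hK]
    ring
  have hcont : ContinuousOn Φ (Icc a t) := by
    apply ContinuousOn.div_const
    apply ContinuousOn.neg
    apply ContinuousOn.rpow_const
    · apply ContinuousOn.div_const
      apply ContinuousOn.sub continuousOn_const
      intro s hs
      exact (Real.continuousAt_rpow_const s ρ (Or.inl (ha.trans_le hs.1).ne')).continuousWithinAt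
    · intro s _; exact Or.inr hα.le
  have hpos : ∀ s ∈ Ioo a t, 0 ≤ K s := by
    intro s hs
    have hs0 : 0 < s := ha.trans hs.1
    have h1 : (0:ℝ) ≤ s ^ (ρ-1) := Real.rpow_nonneg hs0.le _
    have h2 : (0:ℝ) ≤ ((t ^ ρ - s ^ ρ) / ρ) ^ (α - 1) := by
      apply Real.rpow_nonneg
      have h' : (0:ℝ) ≤ t ^ ρ - s ^ ρ := sub_nonneg.mpr (Real.rpow_lt_rpow hs0.le hs.2 hρ).le
      positivity
    exact mul_nonneg h1 h2
  have hint : IntegrableOn K (Ioc a t) :=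
    intervalIntegral.integrableOn_deriv_of_nonneg hcont hderiv hpos
  refine ⟨hint, ?_⟩
  have hii : IntervalIntegrable K volume a t := by
    constructor
    · exact hint
    · simp [Ioc_eq_empty_of_le hat.le, integrableOn_empty]
  have := intervalIntegral.integral_eq_sub_of_hasDerivAt_of_le hat.le hcont hderiv hii
  rw [intervalIntegral.integral_of_le hat.le] at this
  rw [this, hΦ]
  simp only [sub_self, zero_div, Real.zero_rpow hα.ne']
  ring

/-- Fractional integration by parts for Katugampola fractional integrals:
`∫_a^b t^(ρ-1) g(t) (^ρI_{a+}^α h)(t) dt = ∫_a^b t^(ρ-1) h(t) (^ρI_{b-}^α g)(t) dt`. -/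
theorem katugampola_integration_by_parts
    (ρ α a b : ℝ) (hρ : 0 < ρ) (hα : 0 < α) (ha : 0 < a) (hab : a < b)
    (g h : ℝ → ℝ)
    (hg : ContinuousOn g (Set.Icc a b)) (hh : ContinuousOn h (Set.Icc a b)) :
    ∫ t in a..b, t ^ (ρ - 1) * g t * katI ρ α a h t
      = ∫ t in a..b, t ^ (ρ - 1) * h t * katIr ρ α b g t := by
  set μ : Measure ℝ := volume.restrict (Ioc a b) with hμ
  set f : ℝ → ℝ → ℝ := fun t s =>
    (1 / Real.Gamma α * (t ^ (ρ - 1) * g t)) *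
      (s ^ (ρ - 1) * ((t ^ ρ - s ^ ρ) / ρ) ^ (α - 1) * h s) with hf
  set F : ℝ → ℝ → ℝ := fun t s => if s ≤ t then f t s else 0 with hF
  -- bounds
  have hφcont : ContinuousOn (fun t => 1 / Real.Gamma α * (t ^ (ρ - 1) * g t)) (Icc a b) := by
    apply ContinuousOn.mul continuousOn_const
    apply ContinuousOn.mul _ hg
    apply ContinuousOn.rpow_const continuousOn_id
    intro x hx; exact Or.inl (ha.trans_le hx.1).ne'
  obtain ⟨Mφ, hMφ⟩ := isCompact_Icc.exists_bound_of_continuousOn hφcont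
  obtain ⟨Mh, hMh⟩ := isCompact_Icc.exists_bound_of_continuousOn hh
  have hMφ0 : 0 ≤ Mφ := (norm_nonneg _).trans (hMφ a ⟨le_rfl, hab.le⟩)
  have hMh0 : 0 ≤ Mh := (norm_nonneg _).trans (hMh a ⟨le_rfl, hab.le⟩)
  set B : ℝ := Mφ * Mh * (((b ^ ρ - a ^ ρ) / ρ) ^ α / α) with hB
  -- the key per-slice facts
  have key : ∀ t ∈ Ioc a b, IntegrableOn (fun s => f t s) (Ioc a t) ∧
      ∫ s in Ioc a t, ‖f t s‖ ≤ B := by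
    intro t ht
    obtain ⟨hKint, hKval⟩ := kernelA ρ α a t hρ hα ha ht.1
    have hsub : Ioc a t ⊆ Icc a b := fun x hx => ⟨hx.1.le, hx.2.trans ht.2⟩
    have hhm : AEStronglyMeasurable h (volume.restrict (Ioc a t)) :=
      (hh.aestronglyMeasurable measurableSet_Icc).mono_measure
        (Measure.restrict_mono hsub le_rfl)
    have hhb : ∀ᵐ s ∂volume.restrict (Ioc a t), ‖h s‖ ≤ Mh :=
      (ae_restrict_iff' measurableSet_Ioc).mpr (Filter.Eventually.of_forall
        fun s hs => hMh s (hsub hs))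
    have hft : IntegrableOn (fun s => f t s) (Ioc a t) := by
      have h1 := (hKint.bdd_mul hhm hhb).const_mul (1 / Real.Gamma α * (t ^ (ρ - 1) * g t))
      apply h1.congr
      refine Filter.Eventually.of_forall fun s => ?_
      simp only [hf]; ring
    refine ⟨hft, ?_⟩
    have hnorm : ∀ s ∈ Ioc a t, ‖f t s‖ ≤
        Mφ * Mh * (s ^ (ρ - 1) * ((t ^ ρ - s ^ ρ) / ρ) ^ (α - 1)) := by
      intro s hs
      have hs0 : 0 < s := ha.trans hs.1
      have hu0 : (0:ℝ) ≤ t ^ ρ - s ^ ρ :=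
        sub_nonneg.mpr (Real.rpow_le_rpow hs0.le hs.2 hρ.le)
      have hK0 : 0 ≤ s ^ (ρ - 1) * ((t ^ ρ - s ^ ρ) / ρ) ^ (α - 1) :=
        mul_nonneg (Real.rpow_nonneg hs0.le _) (Real.rpow_nonneg (by positivity) _)
      have e1 : ‖f t s‖ = ‖1 / Real.Gamma α * (t ^ (ρ - 1) * g t)‖ *
          ((s ^ (ρ - 1) * ((t ^ ρ - s ^ ρ) / ρ) ^ (α - 1)) * ‖h s‖) := by
        simp only [hf]
        rw [norm_mul (1 / Real.Gamma α * (t ^ (ρ - 1) * g t)),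
          norm_mul (s ^ (ρ - 1) * ((t ^ ρ - s ^ ρ) / ρ) ^ (α - 1)) (h s),
          Real.norm_of_nonneg hK0]
      rw [e1]
      have h2 := hMφ t (hsub ⟨ht.1, le_rfl⟩)
      have h3 := hMh s (hsub hs)
      calc ‖1 / Real.Gamma α * (t ^ (ρ - 1) * g t)‖ *
            ((s ^ (ρ - 1) * ((t ^ ρ - s ^ ρ) / ρ) ^ (α - 1)) * ‖h s‖)
          ≤ Mφ * ((s ^ (ρ - 1) * ((t ^ ρ - s ^ ρ) / ρ) ^ (α - 1)) * Mh) := by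
            gcongr
        _ = Mφ * Mh * (s ^ (ρ - 1) * ((t ^ ρ - s ^ ρ) / ρ) ^ (α - 1)) := by ring
    have h2 : IntegrableOn
        (fun s => Mφ * Mh * (s ^ (ρ - 1) * ((t ^ ρ - s ^ ρ) / ρ) ^ (α - 1))) (Ioc a t) :=
      hKint.const_mul _
    calc ∫ s in Ioc a t, ‖f t s‖
        ≤ ∫ s in Ioc a t, Mφ * Mh * (s ^ (ρ - 1) * ((t ^ ρ - s ^ ρ) / ρ) ^ (α - 1)) :=
          setIntegral_mono_on hft.norm h2 measurableSet_Ioc hnorm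
      _ = Mφ * Mh * (((t ^ ρ - a ^ ρ) / ρ) ^ α / α) := by
          rw [MeasureTheory.integral_const_mul, hKval]
      _ ≤ B := by
          rw [hB]
          have ht0 : 0 < t := ha.trans ht.1
          have h3 : t ^ ρ ≤ b ^ ρ := Real.rpow_le_rpow ht0.le ht.2 hρ.le
          have h4 : a ^ ρ ≤ t ^ ρ := Real.rpow_le_rpow ha.le ht.1.le hρ.le
          have h0 : (0:ℝ) ≤ (t ^ ρ - a ^ ρ) / ρ := div_nonneg (by linarith) hρ.le
          have h6 : (t ^ ρ - a ^ ρ) / ρ ≤ (b ^ ρ - a ^ ρ) / ρ := by gcongr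
          have h5 : ((t ^ ρ - a ^ ρ) / ρ) ^ α ≤ ((b ^ ρ - a ^ ρ) / ρ) ^ α :=
            Real.rpow_le_rpow h0 h6 hα.le
          have h7 : ((t ^ ρ - a ^ ρ) / ρ) ^ α / α ≤ ((b ^ ρ - a ^ ρ) / ρ) ^ α / α := by
            gcongr
          exact mul_le_mul_of_nonneg_left h7 (mul_nonneg hMφ0 hMh0)
  -- measurability
  have hfm : AEStronglyMeasurable (fun p : ℝ × ℝ => f p.1 p.2) (μ.prod μ) := by
    have hprod : μ.prod μ = (volume.prod volume).restrict (Ioc a b ×ˢ Ioc a b) :=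
      Measure.prod_restrict _ _
    rw [hprod]
    have hgm : AEStronglyMeasurable (fun p : ℝ × ℝ => g p.1)
        ((volume.prod volume).restrict (Ioc a b ×ˢ Ioc a b)) := by
      have hc : ContinuousOn (fun p : ℝ × ℝ => g p.1) (Icc a b ×ˢ Icc a b) :=
        hg.comp continuous_fst.continuousOn fun p hp => hp.1
      exact (hc.aestronglyMeasurable (measurableSet_Icc.prod measurableSet_Icc)).mono_measure
        (Measure.restrict_mono (Set.prod_mono Ioc_subset_Icc_self Ioc_subset_Icc_self) le_rfl)
    have hhm2 : AEStronglyMeasurable (fun p : ℝ × ℝ => h p.2)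
        ((volume.prod volume).restrict (Ioc a b ×ˢ Ioc a b)) := by
      have hc : ContinuousOn (fun p : ℝ × ℝ => h p.2) (Icc a b ×ˢ Icc a b) :=
        hh.comp continuous_snd.continuousOn fun p hp => hp.2
      exact (hc.aestronglyMeasurable (measurableSet_Icc.prod measurableSet_Icc)).mono_measure
        (Measure.restrict_mono (Set.prod_mono Ioc_subset_Icc_self Ioc_subset_Icc_self) le_rfl)
    have hmeas : Measurable (fun p : ℝ × ℝ =>
        1 / Real.Gamma α * p.1 ^ (ρ - 1) *
          (p.2 ^ (ρ - 1) * ((p.1 ^ ρ - p.2 ^ ρ) / ρ) ^ (α - 1))) := by fun_prop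
    have := (hmeas.aestronglyMeasurable.mul hgm).mul hhm2
    apply this.congr
    refine Filter.Eventually.of_forall fun p => ?_
    simp only [Pi.mul_apply, hf]; ring
  have hFm : AEStronglyMeasurable (Function.uncurry F) (μ.prod μ) := by
    have heq : Function.uncurry F =
        Set.indicator {p : ℝ × ℝ | p.2 ≤ p.1} (fun p => f p.1 p.2) := by
      funext p
      by_cases hp : p.2 ≤ p.1 <;>
        simp [Function.uncurry, hF, Set.indicator_apply, hp]
    rw [heq]
    exact hfm.indicator (isClosed_le continuous_snd continuous_fst).measurableSet
  have hinter : ∀ t ∈ Ioc a b, Iic t ∩ Ioc a b = Ioc a t := by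
    intro t ht
    rw [inter_comm, Ioc_inter_Iic, min_eq_right ht.2]
  -- integrability on the product
  have hFint : Integrable (Function.uncurry F) (μ.prod μ) := by
    rw [integrable_prod_iff hFm]
    constructor
    · rw [hμ]
      refine (ae_restrict_iff' measurableSet_Ioc).mpr
        (Filter.Eventually.of_forall fun t ht => ?_)
      have he : (fun s => (Function.uncurry F) (t, s)) = Set.indicator (Iic t) (f t) := by
        funext s
        simp [Function.uncurry, hF, Set.indicator_apply, mem_Iic]
      rw [he, integrable_indicator_iff measurableSet_Iic, IntegrableOn,
        Measure.restrict_restrict measurableSet_Iic, hinter t ht]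
      exact (key t ht).1
    · apply Integrable.mono' (integrable_const B) (hFm.norm.integral_prod_right')
      rw [hμ]
      refine (ae_restrict_iff' measurableSet_Ioc).mpr
        (Filter.Eventually.of_forall fun t ht => ?_)
      rw [Real.norm_of_nonneg (integral_nonneg fun s => norm_nonneg _)]
      have he : (fun s => ‖(Function.uncurry F) (t, s)‖)
          = Set.indicator (Iic t) (fun s => ‖f t s‖) := by
        funext s
        by_cases hs : s ≤ t <;>
          simp [Function.uncurry, hF, Set.indicator_apply, mem_Iic, hs]
      rw [he, integral_indicator measurableSet_Iic,
        Measure.restrict_restrict measurableSet_Iic, hinter t ht]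
      exact (key t ht).2
  -- pointwise identification of the two iterated integrals
  have step1 : ∀ t ∈ Ioc a b,
      t ^ (ρ - 1) * g t * katI ρ α a h t = ∫ s, F t s ∂μ := by
    intro t ht
    have he : (fun s => F t s) = Set.indicator (Iic t) (f t) := by
      funext s
      simp [hF, Set.indicator_apply, mem_Iic]
    have h3 : ∫ s in a..t, f t s
        = (1 / Real.Gamma α * (t ^ (ρ - 1) * g t)) *
          ∫ s in a..t, s ^ (ρ - 1) * ((t ^ ρ - s ^ ρ) / ρ) ^ (α - 1) * h s := by
      simp only [hf]
      exact intervalIntegral.integral_const_mul _ _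
    calc t ^ (ρ - 1) * g t * katI ρ α a h t
        = (1 / Real.Gamma α * (t ^ (ρ - 1) * g t)) *
          ∫ s in a..t, s ^ (ρ - 1) * ((t ^ ρ - s ^ ρ) / ρ) ^ (α - 1) * h s := by
          rw [katI]; ring
      _ = ∫ s in a..t, f t s := h3.symm
      _ = ∫ s in Ioc a t, f t s := intervalIntegral.integral_of_le ht.1.le
      _ = ∫ s, F t s ∂μ := by
          rw [he, hμ, integral_indicator measurableSet_Iic,
            Measure.restrict_restrict measurableSet_Iic, hinter t ht]
  have step2 : ∀ s ∈ Ioc a b,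
      (∫ t, F t s ∂μ) = s ^ (ρ - 1) * h s * katIr ρ α b g s := by
    intro s hs
    have he : (fun t => F t s) = Set.indicator (Ici s) (fun t => f t s) := by
      funext t
      simp [hF, Set.indicator_apply, mem_Ici]
    have hinter2 : Ici s ∩ Ioc a b = Icc s b := by
      ext t
      simp only [mem_inter_iff, mem_Ici, mem_Ioc, mem_Icc]
      constructor
      · rintro ⟨h1, _, h3⟩; exact ⟨h1, h3⟩
      · rintro ⟨h1, h2⟩; exact ⟨h1, hs.1.trans_le h1, h2⟩
    have h3 : ∀ t, f t s
        = (s ^ (ρ - 1) * h s * (1 / Real.Gamma α)) *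
          (t ^ (ρ - 1) * ((t ^ ρ - s ^ ρ) / ρ) ^ (α - 1) * g t) := by
      intro t; simp only [hf]; ring
    calc (∫ t, F t s ∂μ)
        = ∫ t in Icc s b, f t s := by
          rw [he, hμ, integral_indicator measurableSet_Ici,
            Measure.restrict_restrict measurableSet_Ici, hinter2]
      _ = ∫ t in Ioc s b, f t s := integral_Icc_eq_integral_Ioc
      _ = ∫ t in s..b, f t s := (intervalIntegral.integral_of_le hs.2).symm
      _ = (s ^ (ρ - 1) * h s * (1 / Real.Gamma α)) *
          ∫ t in s..b, t ^ (ρ - 1) * ((t ^ ρ - s ^ ρ) / ρ) ^ (α - 1) * g t := by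
          rw [show (fun t => f t s) = fun t =>
              (s ^ (ρ - 1) * h s * (1 / Real.Gamma α)) *
                (t ^ (ρ - 1) * ((t ^ ρ - s ^ ρ) / ρ) ^ (α - 1) * g t) from funext h3]
          exact intervalIntegral.integral_const_mul _ _
      _ = s ^ (ρ - 1) * h s * katIr ρ α b g s := by rw [katIr]; ring
  calc ∫ t in a..b, t ^ (ρ - 1) * g t * katI ρ α a h t
      = ∫ t in Ioc a b, t ^ (ρ - 1) * g t * katI ρ α a h t :=
        intervalIntegral.integral_of_le hab.le
    _ = ∫ t, (∫ s, F t s ∂μ) ∂μ := by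
        rw [hμ]
        exact setIntegral_congr_fun measurableSet_Ioc step1
    _ = ∫ s, (∫ t, F t s ∂μ) ∂μ := integral_integral_swap hFint
    _ = ∫ t in Ioc a b, t ^ (ρ - 1) * h t * katIr ρ α b g t := by
        rw [hμ]
        exact setIntegral_congr_fun measurableSet_Ioc step2
    _ = ∫ t in a..b, t ^ (ρ - 1) * h t * katIr ρ α b g t :=
        (intervalIntegral.integral_of_le hab.le).symm
end

section
/- Let ρ > 0, α > 0, σ > 0 and 0 < a. Then for every t > a, (^ρI_{a+}^{α} h)(t) = (Γ(σ)/Γ(σ + α)) · ((t^ρ − a^ρ)/ρ)^{α + σ − 1}, where h(s) = ((s^ρ − a^ρ)/ρ)^{σ − 1}. -/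
open MeasureTheory Real Set Filter

lemma beta_real {u v : ℝ} (hu : 0 < u) (hv : 0 < v) :
    ∫ x in (0:ℝ)..1, x ^ (u - 1) * (1 - x) ^ (v - 1)
      = Real.Gamma u * Real.Gamma v / Real.Gamma (u + v) := by
  have huc : 0 < (u : ℂ).re := by simpa using hu
  have hvc : 0 < (v : ℂ).re := by simpa using hv
  have h := Complex.Gamma_mul_Gamma_eq_betaIntegral huc hvc
  have hbeta : Complex.betaIntegral u v
      = ((∫ x in (0:ℝ)..1, x ^ (u - 1) * (1 - x) ^ (v - 1) : ℝ) : ℂ) := by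
    rw [Complex.betaIntegral, ← intervalIntegral.integral_ofReal]
    apply intervalIntegral.integral_congr
    intro x hx
    rw [Set.uIcc_of_le (by norm_num : (0:ℝ) ≤ 1)] at hx
    have hx0 : 0 ≤ x := hx.1
    have hx1 : 0 ≤ 1 - x := by linarith [hx.2]
    show (x:ℂ) ^ ((u:ℂ) - 1) * ((1:ℂ) - x) ^ ((v:ℂ) - 1)
      = ((x ^ (u - 1) * (1 - x) ^ (v - 1) : ℝ) : ℂ)
    rw [Complex.ofReal_mul, Complex.ofReal_cpow hx0, Complex.ofReal_cpow hx1]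
    push_cast
    ring
  rw [hbeta, show ((u : ℂ) + v) = ((u + v : ℝ) : ℂ) by push_cast; ring,
    Complex.Gamma_ofReal, Complex.Gamma_ofReal, Complex.Gamma_ofReal,
    ← Complex.ofReal_mul, ← Complex.ofReal_mul] at h
  have h' : Real.Gamma u * Real.Gamma v
      = Real.Gamma (u + v) * ∫ x in (0:ℝ)..1, x ^ (u - 1) * (1 - x) ^ (v - 1) :=
    Complex.ofReal_injective h
  have hpos : 0 < Real.Gamma (u + v) := Real.Gamma_pos_of_pos (by linarith)
  field_simp
  linarith [h']

lemma beta_scaled {u v T : ℝ} (hu : 0 < u) (hv : 0 < v) (hT : 0 < T) :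
    ∫ x in (0:ℝ)..T, x ^ (u - 1) * (T - x) ^ (v - 1)
      = T ^ (u + v - 1) * (Real.Gamma u * Real.Gamma v / Real.Gamma (u + v)) := by
  have h := intervalIntegral.integral_comp_mul_right
    (a := (0:ℝ)) (b := 1) (fun x => x ^ (u - 1) * (T - x) ^ (v - 1)) hT.ne'
  simp only [zero_mul, one_mul, smul_eq_mul] at h
  have h2 : (∫ y in (0:ℝ)..1, (y * T) ^ (u - 1) * (T - y * T) ^ (v - 1))
      = T ^ (u - 1) * T ^ (v - 1) * ∫ y in (0:ℝ)..1, y ^ (u - 1) * (1 - y) ^ (v - 1) := by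
    rw [← intervalIntegral.integral_const_mul]
    apply intervalIntegral.integral_congr
    intro y hy
    rw [Set.uIcc_of_le (by norm_num : (0:ℝ) ≤ 1)] at hy
    have hy0 : 0 ≤ y := hy.1
    have hy1 : 0 ≤ 1 - y := by linarith [hy.2]
    show (y * T) ^ (u - 1) * (T - y * T) ^ (v - 1)
      = T ^ (u - 1) * T ^ (v - 1) * (y ^ (u - 1) * (1 - y) ^ (v - 1))
    rw [show T - y * T = (1 - y) * T by ring, Real.mul_rpow hy0 hT.le,
      Real.mul_rpow hy1 hT.le]
    ring
  rw [h2, beta_real hu hv] at h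
  have hpow : T * (T ^ (u - 1) * T ^ (v - 1)) = T ^ (u + v - 1) := by
    rw [← Real.rpow_add hT, mul_comm, ← Real.rpow_add_one hT.ne']
    congr 1
    ring
  have : (∫ x in (0:ℝ)..T, x ^ (u - 1) * (T - x) ^ (v - 1))
      = T * (T ^ (u - 1) * T ^ (v - 1) * (Real.Gamma u * Real.Gamma v / Real.Gamma (u + v))) := by
    rw [h]; field_simp
  rw [this, ← mul_assoc, hpow]

/-- Katugampola fractional integral of a power function:
`(^ρI_{a+}^α ((·^ρ - a^ρ)/ρ)^(σ-1))(t) = (Γ(σ)/Γ(σ+α)) ((t^ρ - a^ρ)/ρ)^(α+σ-1)`. -/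
theorem katI_power
    (ρ α σ a : ℝ) (hρ : 0 < ρ) (hα : 0 < α) (hσ : 0 < σ) (ha : 0 < a)
    (t : ℝ) (ht : a < t) :
    katI ρ α a (fun s => ((s ^ ρ - a ^ ρ) / ρ) ^ (σ - 1)) t
      = (Real.Gamma σ / Real.Gamma (σ + α)) * ((t ^ ρ - a ^ ρ) / ρ) ^ (α + σ - 1) := by
  set T : ℝ := (t ^ ρ - a ^ ρ) / ρ with hTdef
  have hat : a ^ ρ < t ^ ρ := Real.rpow_lt_rpow ha.le ht hρ
  have hT : 0 < T := div_pos (by linarith) hρ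
  set φ : ℝ → ℝ := fun s => (s ^ ρ - a ^ ρ) / ρ with hφ
  have hmono : StrictMonoOn φ (Set.Ici 0) := by
    intro x hx y _ hxy
    have hxy' : x ^ ρ < y ^ ρ := Real.rpow_lt_rpow hx hxy hρ
    simp only [hφ]
    gcongr
  have hφa : φ a = 0 := by simp [hφ]
  have hφt : φ t = T := rfl
  have hsub : Set.Ioo a t ⊆ Set.Ici (0:ℝ) := fun s hs => le_of_lt (lt_trans ha hs.1)
  have hinj : Set.InjOn φ (Set.Ioo a t) :=
    (hmono.injOn).mono hsub
  have hcont : ContinuousOn φ (Set.Icc a t) := by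
    apply ContinuousOn.div_const
    apply ContinuousOn.sub _ continuousOn_const
    intro s hs
    exact (Real.continuousAt_rpow_const s ρ (Or.inl (by linarith [hs.1]))).continuousWithinAt
  have himage : φ '' Set.Ioo a t = Set.Ioo 0 T := by
    apply Set.Subset.antisymm
    · rintro x ⟨s, hs, rfl⟩
      constructor
      · rw [← hφa]; exact hmono (Set.mem_Ici.mpr ha.le) (hsub hs) hs.1
      · rw [← hφt]; exact hmono (hsub hs) (Set.mem_Ici.mpr (by linarith [hs.1])) hs.2
    · rw [← hφa, ← hφt]
      exact intermediate_value_Ioo ht.le hcont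
  have hderiv : ∀ s ∈ Set.Ioo a t, HasDerivWithinAt φ (s ^ (ρ - 1)) (Set.Ioo a t) s := by
    intro s hs
    have hs0 : s ≠ 0 := by linarith [hs.1, ha]
    have h1 : HasDerivAt (fun x : ℝ => x ^ ρ) (ρ * s ^ (ρ - 1)) s :=
      Real.hasDerivAt_rpow_const (Or.inl hs0)
    have h2 : HasDerivAt φ (ρ * s ^ (ρ - 1) / ρ) s := (h1.sub_const (a ^ ρ)).div_const ρ
    have : ρ * s ^ (ρ - 1) / ρ = s ^ (ρ - 1) := by field_simp
    rw [this] at h2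
    exact h2.hasDerivWithinAt
  have key : (∫ s in a..t, s ^ (ρ - 1) * ((t ^ ρ - s ^ ρ) / ρ) ^ (α - 1)
        * ((s ^ ρ - a ^ ρ) / ρ) ^ (σ - 1))
      = ∫ x in (0:ℝ)..T, x ^ (σ - 1) * (T - x) ^ (α - 1) := by
    rw [intervalIntegral.integral_of_le ht.le, intervalIntegral.integral_of_le hT.le,
      MeasureTheory.integral_Ioc_eq_integral_Ioo, MeasureTheory.integral_Ioc_eq_integral_Ioo,
      ← himage,
      MeasureTheory.integral_image_eq_integral_abs_deriv_smul measurableSet_Ioo hderiv hinj]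
    apply MeasureTheory.setIntegral_congr_fun measurableSet_Ioo
    intro s hs
    have hs0 : (0:ℝ) < s := lt_trans ha hs.1
    have habs : |s ^ (ρ - 1)| = s ^ (ρ - 1) := abs_of_nonneg (Real.rpow_nonneg hs0.le _)
    have hTφ : T - φ s = (t ^ ρ - s ^ ρ) / ρ := by
      simp only [hφ, hTdef]; ring
    simp only [smul_eq_mul, habs, hTφ]
    simp only [hφ]
    ring
  have hΓα : (0:ℝ) < Real.Gamma α := Real.Gamma_pos_of_pos hα
  have hΓσα : (0:ℝ) < Real.Gamma (σ + α) := Real.Gamma_pos_of_pos (by linarith)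
  unfold katI
  rw [key, beta_scaled hσ hα hT, show σ + α - 1 = α + σ - 1 by ring]
  field_simp
end

section
/- Let ρ > 0, α > 0, β > 0 and 0 < a < b < ∞, and let h : ℝ → ℝ be continuous on [a, b]. Then for every t ∈ (a, b], (^ρI_{a+}^{α} (^ρI_{a+}^{β} h))(t) = (^ρI_{a+}^{α+β} h)(t). -/
open MeasureTheory Real Set Filter

lemma realBeta (u v : ℝ) (hu : 0 < u) (hv : 0 < v) :
    ∫ x in (0:ℝ)..1, x ^ (u - 1) * (1 - x) ^ (v - 1)
      = Real.Gamma u * Real.Gamma v / Real.Gamma (u + v) := by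
  have key : Complex.Gamma u * Complex.Gamma v
      = Complex.Gamma (u + v) * Complex.betaIntegral u v :=
    Complex.Gamma_mul_Gamma_eq_betaIntegral (by simpa using hu) (by simpa using hv)
  have hbeta : Complex.betaIntegral u v
      = ((∫ x in (0:ℝ)..1, x ^ (u - 1) * (1 - x) ^ (v - 1) : ℝ) : ℂ) := by
    rw [Complex.betaIntegral, ← intervalIntegral.integral_ofReal]
    refine intervalIntegral.integral_congr fun x hx => ?_
    rw [Set.uIcc_of_le (by norm_num : (0:ℝ) ≤ 1)] at hx
    rw [Complex.ofReal_mul, Complex.ofReal_cpow hx.1, Complex.ofReal_cpow (by linarith [hx.2] : (0:ℝ) ≤ 1 - x)]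
    push_cast
    ring_nf
  have hne : Real.Gamma (u + v) ≠ 0 := (Real.Gamma_pos_of_pos (by linarith)).ne'
  have := key
  rw [hbeta, Complex.Gamma_ofReal, Complex.Gamma_ofReal, ← Complex.ofReal_add,
    Complex.Gamma_ofReal, ← Complex.ofReal_mul, ← Complex.ofReal_mul] at this
  have h2 : Real.Gamma u * Real.Gamma v
      = Real.Gamma (u + v) * ∫ x in (0:ℝ)..1, x ^ (u - 1) * (1 - x) ^ (v - 1) :=
    mod_cast this
  field_simp [h2]
  rw [h2]; ring

lemma kernelInt (α β u t : ℝ) (hα : 0 < α) (hβ : 0 < β) (hut : u < t) :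
    ∫ s in u..t, (t - s) ^ (α - 1) * (s - u) ^ (β - 1)
      = Real.Gamma α * Real.Gamma β / Real.Gamma (α + β) * (t - u) ^ (α + β - 1) := by
  set c := t - u with hc
  have hcpos : 0 < c := by simp [hc]; linarith
  have h1 : ∫ s in u..t, (t - s) ^ (α - 1) * (s - u) ^ (β - 1)
      = c • ∫ x in (0:ℝ)..1, (t - (c * x + u)) ^ (α - 1) * ((c * x + u) - u) ^ (β - 1) := by
    rw [intervalIntegral.integral_comp_mul_add
      (fun s => (t - s) ^ (α - 1) * (s - u) ^ (β - 1)) hcpos.ne' u]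
    rw [smul_smul, mul_inv_cancel₀ hcpos.ne', one_smul]
    norm_num [hc]
  rw [h1]
  have h2 : ∀ x ∈ Set.uIcc (0:ℝ) 1,
      (t - (c * x + u)) ^ (α - 1) * ((c * x + u) - u) ^ (β - 1)
        = (c ^ (α - 1) * c ^ (β - 1)) * (x ^ (β - 1) * (1 - x) ^ (α - 1)) := by
    intro x hx
    rw [Set.uIcc_of_le (by norm_num : (0:ℝ) ≤ 1)] at hx
    have e1 : t - (c * x + u) = c * (1 - x) := by rw [hc]; ring
    have e2 : (c * x + u) - u = c * x := by ring
    rw [e1, e2, Real.mul_rpow hcpos.le (by linarith [hx.2]),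
      Real.mul_rpow hcpos.le hx.1]
    ring
  rw [intervalIntegral.integral_congr h2, intervalIntegral.integral_const_mul,
    realBeta β α hβ hα]
  have : c • (c ^ (α - 1) * c ^ (β - 1) * (Real.Gamma β * Real.Gamma α / Real.Gamma (β + α)))
      = (c * (c ^ (α - 1) * c ^ (β - 1))) * (Real.Gamma β * Real.Gamma α / Real.Gamma (β + α)) := by
    simp [smul_eq_mul]; ring
  rw [this]
  have hcpow : c * (c ^ (α - 1) * c ^ (β - 1)) = c ^ (α + β - 1) := by
    rw [← Real.rpow_add hcpos]
    nth_rewrite 1 [show c = c ^ (1:ℝ) from (Real.rpow_one c).symm]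
    rw [← Real.rpow_add hcpos]
    ring_nf
  rw [hcpow, add_comm β α]
  ring


lemma katSubst (ρ a t : ℝ) (hρ : 0 < ρ) (ha : 0 < a) (hat : a ≤ t) (F : ℝ → ℝ) :
    ∫ s in a..t, s ^ (ρ - 1) * F (s ^ ρ / ρ)
      = ∫ u in a ^ ρ / ρ..t ^ ρ / ρ, F u := by
  set φ : ℝ → ℝ := fun s => s ^ ρ / ρ with hφ
  have hmono : ∀ x y : ℝ, 0 ≤ x → x < y → φ x < φ y := fun x y hx hxy =>
    div_lt_div_of_pos_right (Real.rpow_lt_rpow hx hxy hρ) hρ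
  have hatρ : φ a ≤ φ t := by
    rcases eq_or_lt_of_le hat with h | h
    · simp [h]
    · exact (hmono a t ha.le h).le
  have himg : φ '' Set.Ioo a t = Set.Ioo (φ a) (φ t) := by
    apply Set.ext; intro u
    constructor
    · rintro ⟨s, hs, rfl⟩
      exact ⟨hmono a s ha.le hs.1, hmono s t (ha.trans hs.1).le hs.2⟩
    · rintro ⟨h1, h2⟩
      have hφa : 0 < φ a := div_pos (Real.rpow_pos_of_pos ha ρ) hρ
      have hu : 0 < u := hφa.trans h1
      refine ⟨(ρ * u) ^ (1 / ρ), ⟨?_, ?_⟩, ?_⟩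
      · have : a ^ ρ < ρ * u := by
          have := (div_lt_iff₀ hρ).mp h1
          linarith [this]
        calc a = (a ^ ρ) ^ (1 / ρ) := by
                rw [← Real.rpow_mul ha.le, mul_one_div, div_self hρ.ne', Real.rpow_one]
          _ < (ρ * u) ^ (1 / ρ) :=
                Real.rpow_lt_rpow (Real.rpow_pos_of_pos ha ρ).le this (by positivity)
      · have : ρ * u < t ^ ρ := by
          have := (lt_div_iff₀ hρ).mp h2
          linarith [this]
        calc (ρ * u) ^ (1 / ρ) < (t ^ ρ) ^ (1 / ρ) :=
                Real.rpow_lt_rpow (by positivity) this (by positivity)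
          _ = t := by
                rw [← Real.rpow_mul (ha.trans_le hat).le, mul_one_div, div_self hρ.ne',
                  Real.rpow_one]
      · rw [hφ]; simp only
        rw [← Real.rpow_mul (by positivity : (0:ℝ) ≤ ρ * u), one_div_mul_cancel hρ.ne',
          Real.rpow_one, mul_div_cancel_left₀ _ hρ.ne']
  have hderiv : ∀ s ∈ Set.Ioo a t, HasDerivWithinAt φ (s ^ (ρ - 1)) (Set.Ioo a t) s := by
    intro s hs
    have hs0 : s ≠ 0 := (ha.trans hs.1).ne'
    have h1 : HasDerivAt (fun x : ℝ => x ^ ρ) (ρ * s ^ (ρ - 1)) s :=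
      Real.hasDerivAt_rpow_const (Or.inl hs0)
    have h2 : HasDerivAt φ (ρ * s ^ (ρ - 1) / ρ) s := h1.div_const ρ
    rw [mul_div_cancel_left₀ _ hρ.ne'] at h2
    exact h2.hasDerivWithinAt
  have hsm : StrictMonoOn φ (Set.Ioo a t) := fun x hx y _ h => hmono x y (ha.trans hx.1).le h
  have hinj : Set.InjOn φ (Set.Ioo a t) := hsm.injOn
  have key := MeasureTheory.integral_image_eq_integral_abs_deriv_smul
    measurableSet_Ioo hderiv hinj F
  rw [himg] at key
  rw [intervalIntegral.integral_of_le hat, intervalIntegral.integral_of_le hatρ,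
    MeasureTheory.integral_Ioc_eq_integral_Ioo, MeasureTheory.integral_Ioc_eq_integral_Ioo,
    key]
  refine MeasureTheory.setIntegral_congr_fun measurableSet_Ioo fun s hs => ?_
  have : |s ^ (ρ - 1)| = s ^ (ρ - 1) :=
    abs_of_nonneg (Real.rpow_nonneg (ha.trans hs.1).le _)
  rw [smul_eq_mul, this]

lemma Real.measurable_rpow_const (c : ℝ) : Measurable fun x : ℝ => x ^ c := by
  measurability

lemma rpow_intInt (γ A s : ℝ) (hγ : 0 < γ) :
    IntervalIntegrable (fun u => (s - u) ^ (γ - 1)) volume A s := by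
  have h := (intervalIntegral.intervalIntegrable_rpow'
    (by linarith : (-1:ℝ) < γ - 1) (a := 0) (b := s - A)).comp_sub_left s
  simpa using h.symm

lemma RLsemigroup (α β A T : ℝ) (hα : 0 < α) (hβ : 0 < β) (hAT : A < T)
    (g : ℝ → ℝ) (hg : Continuous g) :
    ∫ s in A..T, (T - s) ^ (α - 1) * ∫ u in A..s, (s - u) ^ (β - 1) * g u
      = (Real.Gamma α * Real.Gamma β / Real.Gamma (α + β))
          * ∫ u in A..T, (T - u) ^ (α + β - 1) * g u := by
  set μ := volume.restrict (Set.Ioo A T) with hμ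
  set K : ℝ → ℝ → ℝ :=
    fun s u => if u < s then (T - s) ^ (α - 1) * ((s - u) ^ (β - 1) * g u) else 0 with hK
  obtain ⟨M, hM⟩ : ∃ M, ∀ x ∈ Set.Icc A T, ‖g x‖ ≤ M :=
    isCompact_Icc.exists_bound_of_continuousOn hg.continuousOn
  have hM0 : 0 ≤ M := le_trans (norm_nonneg _) (hM A ⟨le_refl A, hAT.le⟩)
  -- measurability
  have hKmeas : Measurable (Function.uncurry K) := by
    apply Measurable.ite (measurableSet_lt measurable_snd measurable_fst)
    · exact (((Real.measurable_rpow_const (α-1)).comp (measurable_const.sub measurable_fst)).mul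
        (((Real.measurable_rpow_const (β-1)).comp (measurable_fst.sub measurable_snd)).mul
          (hg.measurable.comp measurable_snd)))
    · exact measurable_const
  -- K s as indicator in u
  have hKind : ∀ s, K s = Set.indicator (Set.Iio s)
      (fun u => (T - s) ^ (α - 1) * ((s - u) ^ (β - 1) * g u)) := by
    intro s; funext u; simp [hK, Set.indicator_apply, Set.mem_Iio]
  -- integrability in u for fixed s
  have hint1 : ∀ s ∈ Set.Ioo A T, Integrable (K s) μ := by
    intro s hs
    rw [hKind s, hμ]
    rw [MeasureTheory.integrable_indicator_iff measurableSet_Iio]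
    rw [IntegrableOn, Measure.restrict_restrict measurableSet_Iio]
    have hset : Set.Iio s ∩ Set.Ioo A T = Set.Ioo A s := by
      ext x; simp only [Set.mem_inter_iff, Set.mem_Iio, Set.mem_Ioo]
      constructor
      · rintro ⟨h1, h2, h3⟩; exact ⟨h2, h1⟩
      · rintro ⟨h1, h2⟩; exact ⟨h2, h1, h2.trans hs.2⟩
    rw [hset]
    have hii : IntervalIntegrable
        (fun u => (T - s) ^ (α - 1) * ((s - u) ^ (β - 1) * g u)) volume A s :=
      ((rpow_intInt β A s hβ).mul_continuousOn hg.continuousOn).const_mul _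
    exact ((intervalIntegrable_iff_integrableOn_Ioc_of_le hs.1.le).mp hii).mono_set
      Set.Ioo_subset_Ioc_self
  -- value of the simple rpow integral
  have hval : ∀ s, A < s → (∫ u in A..s, (s - u) ^ (β - 1)) = (s - A) ^ β / β := by
    intro s hAs
    rw [intervalIntegral.integral_comp_sub_left (fun x => x ^ (β - 1)) s, sub_self]
    rw [integral_rpow (Or.inl (by linarith))]
    rw [Real.zero_rpow (by linarith : β - 1 + 1 ≠ 0), sub_add_cancel, sub_zero]
  set C : ℝ := M * ((T - A) ^ β / β) with hCdef
  have hC : ∀ s ∈ Set.Ioo A T, (∫ u, ‖K s u‖ ∂μ) ≤ (T - s) ^ (α - 1) * C := by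
    intro s hs
    have hsetr : Set.Ioo A T ∩ Set.Iio s = Set.Ioo A s := by
      ext x; simp only [Set.mem_inter_iff, Set.mem_Iio, Set.mem_Ioo]
      constructor
      · rintro ⟨⟨h1, h2⟩, h3⟩; exact ⟨h1, h3⟩
      · rintro ⟨h1, h2⟩; exact ⟨⟨h1, h2.trans hs.2⟩, h2⟩
    have hTs : (0:ℝ) ≤ (T - s) ^ (α - 1) := Real.rpow_nonneg (by linarith [hs.2]) _
    have step1 : (∫ u, ‖K s u‖ ∂μ)
        = ∫ u in Set.Ioo A s, ‖(T - s) ^ (α - 1) * ((s - u) ^ (β - 1) * g u)‖ := by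
      rw [hμ, hKind s]
      simp_rw [norm_indicator_eq_indicator_norm]
      rw [MeasureTheory.setIntegral_indicator measurableSet_Iio, hsetr]
    have hii : IntervalIntegrable
        (fun u => (T - s) ^ (α - 1) * ((s - u) ^ (β - 1) * g u)) volume A s :=
      ((rpow_intInt β A s hβ).mul_continuousOn hg.continuousOn).const_mul _
    have hii2 : IntervalIntegrable
        (fun u => (T - s) ^ (α - 1) * ((s - u) ^ (β - 1) * M)) volume A s :=
      (((rpow_intInt β A s hβ).mul_const M).const_mul _)
    have step2 : ∫ u in Set.Ioo A s, ‖(T - s) ^ (α - 1) * ((s - u) ^ (β - 1) * g u)‖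
        ≤ ∫ u in Set.Ioo A s, (T - s) ^ (α - 1) * ((s - u) ^ (β - 1) * M) := by
      refine MeasureTheory.setIntegral_mono_on
        (((intervalIntegrable_iff_integrableOn_Ioc_of_le hs.1.le).mp hii.norm).mono_set
          Set.Ioo_subset_Ioc_self)
        (((intervalIntegrable_iff_integrableOn_Ioc_of_le hs.1.le).mp hii2).mono_set
          Set.Ioo_subset_Ioc_self)
        measurableSet_Ioo (fun u hu => ?_)
      have hsu : (0:ℝ) ≤ (s - u) ^ (β - 1) := Real.rpow_nonneg (by linarith [hu.2]) _
      rw [norm_mul, norm_mul, Real.norm_of_nonneg hTs, Real.norm_of_nonneg hsu]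
      have hgu := hM u ⟨hu.1.le, (hu.2.trans hs.2).le⟩
      have : (s - u) ^ (β - 1) * ‖g u‖ ≤ (s - u) ^ (β - 1) * M :=
        mul_le_mul_of_nonneg_left hgu hsu
      exact mul_le_mul_of_nonneg_left this hTs
    have step3 : ∫ u in Set.Ioo A s, (T - s) ^ (α - 1) * ((s - u) ^ (β - 1) * M)
        = (T - s) ^ (α - 1) * (M * ((s - A) ^ β / β)) := by
      rw [← MeasureTheory.integral_Ioc_eq_integral_Ioo,
        ← intervalIntegral.integral_of_le hs.1.le]
      rw [intervalIntegral.integral_const_mul]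
      have : (∫ u in A..s, (s - u) ^ (β - 1) * M) = (∫ u in A..s, (s - u) ^ (β - 1)) * M := by
        rw [intervalIntegral.integral_mul_const]
      rw [this, hval s hs.1]
      ring
    have step4 : (T - s) ^ (α - 1) * (M * ((s - A) ^ β / β)) ≤ (T - s) ^ (α - 1) * C := by
      apply mul_le_mul_of_nonneg_left _ hTs
      rw [hCdef]
      apply mul_le_mul_of_nonneg_left _ hM0
      have h1 : (s - A) ^ β ≤ (T - A) ^ β :=
        Real.rpow_le_rpow (by linarith [hs.1]) (by linarith [hs.2]) hβ.le
      exact (div_le_div_iff_of_pos_right hβ).mpr h1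
    calc (∫ u, ‖K s u‖ ∂μ) = _ := step1
      _ ≤ _ := step2
      _ = _ := step3
      _ ≤ _ := step4
  -- integrability of the dominating function
  have hbound_int : Integrable (fun s => (T - s) ^ (α - 1) * C) μ := by
    have hii := (rpow_intInt α A T hα).mul_const C
    exact ((intervalIntegrable_iff_integrableOn_Ioc_of_le hAT.le).mp hii).mono_set
      Set.Ioo_subset_Ioc_self
  -- integrability on the product
  have hKint : Integrable (Function.uncurry K) (μ.prod μ) := by
    refine (MeasureTheory.integrable_prod_iff hKmeas.aestronglyMeasurable).mpr ⟨?_, ?_⟩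
    · filter_upwards [ae_restrict_mem measurableSet_Ioo] with s hs using hint1 s hs
    · apply Integrable.mono' hbound_int
        (hKmeas.aestronglyMeasurable.norm.integral_prod_right')
      filter_upwards [ae_restrict_mem measurableSet_Ioo] with s hs
      rw [Real.norm_of_nonneg (integral_nonneg fun u => norm_nonneg _)]
      exact hC s hs
  have swap := MeasureTheory.integral_integral_swap hKint
  set B : ℝ := Real.Gamma α * Real.Gamma β / Real.Gamma (α + β) with hBdef
  -- LHS equals iterated integral
  have hLHS : (∫ s in A..T, (T - s) ^ (α - 1) * ∫ u in A..s, (s - u) ^ (β - 1) * g u)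
      = ∫ s, (∫ u, K s u ∂μ) ∂μ := by
    rw [hμ, intervalIntegral.integral_of_le hAT.le, MeasureTheory.integral_Ioc_eq_integral_Ioo]
    refine MeasureTheory.setIntegral_congr_fun measurableSet_Ioo (fun s hs => ?_)
    have hsetr : Set.Ioo A T ∩ Set.Iio s = Set.Ioo A s := by
      ext x; simp only [Set.mem_inter_iff, Set.mem_Iio, Set.mem_Ioo]
      constructor
      · rintro ⟨⟨h1, h2⟩, h3⟩; exact ⟨h1, h3⟩
      · rintro ⟨h1, h2⟩; exact ⟨⟨h1, h2.trans hs.2⟩, h2⟩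
    rw [hKind s, MeasureTheory.setIntegral_indicator measurableSet_Iio, hsetr,
      ← MeasureTheory.integral_Ioc_eq_integral_Ioo, ← intervalIntegral.integral_of_le hs.1.le,
      intervalIntegral.integral_const_mul]
  -- inner integral in s for fixed u
  have hRHSinner : ∀ u ∈ Set.Ioo A T,
      (∫ s, K s u ∂μ) = (B * (T - u) ^ (α + β - 1)) * g u := by
    intro u hu
    have hindu : (fun s => K s u) = Set.indicator (Set.Ioi u)
        (fun s => (T - s) ^ (α - 1) * ((s - u) ^ (β - 1) * g u)) := by
      funext s; simp [hK, Set.indicator_apply, Set.mem_Ioi]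
    have hsetr : Set.Ioo A T ∩ Set.Ioi u = Set.Ioo u T := by
      ext x; simp only [Set.mem_inter_iff, Set.mem_Ioi, Set.mem_Ioo]
      constructor
      · rintro ⟨⟨h1, h2⟩, h3⟩; exact ⟨h3, h2⟩
      · rintro ⟨h1, h2⟩; exact ⟨⟨hu.1.trans h1, h2⟩, h1⟩
    rw [hμ, hindu, MeasureTheory.setIntegral_indicator measurableSet_Ioi, hsetr,
      ← MeasureTheory.integral_Ioc_eq_integral_Ioo, ← intervalIntegral.integral_of_le hu.2.le]
    have : (∫ s in u..T, (T - s) ^ (α - 1) * ((s - u) ^ (β - 1) * g u))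
        = (∫ s in u..T, (T - s) ^ (α - 1) * (s - u) ^ (β - 1)) * g u := by
      rw [← intervalIntegral.integral_mul_const]
      exact intervalIntegral.integral_congr fun s _ => by ring
    rw [this, kernelInt α β u T hα hβ hu.2, hBdef]
  -- assemble
  rw [hLHS, swap]
  have : (∫ u, (∫ s, K s u ∂μ) ∂μ)
      = ∫ u in Set.Ioo A T, (B * (T - u) ^ (α + β - 1)) * g u := by
    rw [hμ]
    exact MeasureTheory.setIntegral_congr_fun measurableSet_Ioo hRHSinner
  rw [this, intervalIntegral.integral_of_le hAT.le, MeasureTheory.integral_Ioc_eq_integral_Ioo,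
    ← MeasureTheory.integral_const_mul]
  exact MeasureTheory.setIntegral_congr_fun measurableSet_Ioo fun u _ => by ring

lemma RLfull (α β A T : ℝ) (hα : 0 < α) (hβ : 0 < β) (hAT : A < T)
    (g : ℝ → ℝ) (hg : Continuous g) :
    (1 / Real.Gamma α) * ∫ s in A..T, (T - s) ^ (α - 1) *
        ((1 / Real.Gamma β) * ∫ u in A..s, (s - u) ^ (β - 1) * g u)
      = (1 / Real.Gamma (α + β)) * ∫ u in A..T, (T - u) ^ (α + β - 1) * g u := by
  have h1 : (∫ s in A..T, (T - s) ^ (α - 1) *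
        ((1 / Real.Gamma β) * ∫ u in A..s, (s - u) ^ (β - 1) * g u))
      = (1 / Real.Gamma β) *
        ∫ s in A..T, (T - s) ^ (α - 1) * ∫ u in A..s, (s - u) ^ (β - 1) * g u := by
    rw [← intervalIntegral.integral_const_mul]
    exact intervalIntegral.integral_congr fun s _ => by ring
  rw [h1, RLsemigroup α β A T hα hβ hAT g hg]
  have hga := (Real.Gamma_pos_of_pos hα).ne'
  have hgb := (Real.Gamma_pos_of_pos hβ).ne'
  have hgab := (Real.Gamma_pos_of_pos (by linarith : (0:ℝ) < α + β)).ne'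
  field_simp

/-- Semigroup property of the Katugampola fractional integral:
`^ρI_{a+}^α (^ρI_{a+}^β h) = ^ρI_{a+}^{α+β} h` on `(a, b]`. -/
theorem katI_semigroup
    (ρ α β a b : ℝ) (hρ : 0 < ρ) (hα : 0 < α) (hβ : 0 < β)
    (ha : 0 < a) (hab : a < b)
    (h : ℝ → ℝ) (hh : ContinuousOn h (Set.Icc a b)) :
    ∀ t ∈ Set.Ioc a b,
      katI ρ α a (katI ρ β a h) t = katI ρ (α + β) a h t := by
  intro t ht
  -- continuous extension of h
  set H : ℝ → ℝ := fun x => h (↑(Set.projIcc a b hab.le x)) with hHdef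
  have hHcont : Continuous H :=
    hh.comp_continuous (continuous_subtype_val.comp continuous_projIcc)
      (fun x => (Set.projIcc a b hab.le x).2)
  have hHeq : ∀ x ∈ Set.Icc a b, H x = h x := fun x hx => by
    rw [hHdef]; simp [Set.projIcc_of_mem hab.le hx]
  -- setup
  have hta : a < t := ht.1
  have htb : t ≤ b := ht.2
  set A : ℝ := a ^ ρ / ρ with hAdef
  set T : ℝ := t ^ ρ / ρ with hTdef
  have hAT : A < T :=
    div_lt_div_of_pos_right (Real.rpow_lt_rpow ha.le hta hρ) hρ
  set g : ℝ → ℝ := fun u => H ((ρ * u) ^ (1 / ρ)) with hgdef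
  have hgcont : Continuous g :=
    hHcont.comp ((continuous_const.mul continuous_id).rpow_const
      (fun x => Or.inr (by positivity)))
  have hginv : ∀ s : ℝ, 0 < s → g (s ^ ρ / ρ) = H s := by
    intro s hs
    rw [hgdef]
    simp only
    rw [mul_div_cancel₀ _ hρ.ne', ← Real.rpow_mul hs.le, mul_one_div,
      div_self hρ.ne', Real.rpow_one]
  -- katI of H equals RL integral of g
  have keq : ∀ γ : ℝ, ∀ x, a ≤ x →
      katI ρ γ a H x = (1 / Real.Gamma γ) *
        ∫ u in A..(x ^ ρ / ρ), ((x ^ ρ / ρ) - u) ^ (γ - 1) * g u := by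
    intro γ x hx
    rw [katI]
    congr 1
    rw [hAdef, ← katSubst ρ a x hρ ha hx
      (fun u => ((x ^ ρ / ρ) - u) ^ (γ - 1) * g u)]
    refine intervalIntegral.integral_congr fun s hs => ?_
    rw [Set.uIcc_of_le hx] at hs
    have hs0 : 0 < s := ha.trans_le hs.1
    rw [hginv s hs0]
    rw [show x ^ ρ / ρ - s ^ ρ / ρ = (x ^ ρ - s ^ ρ) / ρ by ring]
    ring
  -- replace h by H in inner integrals
  have hinner : ∀ x, a ≤ x → x ≤ b → katI ρ β a h x = katI ρ β a H x := by
    intro x hax hxb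
    rw [katI, katI]
    congr 1
    refine intervalIntegral.integral_congr fun τ hτ => ?_
    rw [Set.uIcc_of_le hax] at hτ
    rw [hHeq τ ⟨hτ.1, hτ.2.trans hxb⟩]
  have houter : katI ρ (α + β) a h t = katI ρ (α + β) a H t := by
    rw [katI, katI]
    congr 1
    refine intervalIntegral.integral_congr fun τ hτ => ?_
    rw [Set.uIcc_of_le hta.le] at hτ
    rw [hHeq τ ⟨hτ.1, hτ.2.trans htb⟩]
  -- main computation
  rw [houter, keq (α + β) t hta.le]
  rw [katI]
  have hmain : (∫ s in a..t, s ^ (ρ - 1) * ((t ^ ρ - s ^ ρ) / ρ) ^ (α - 1) * katI ρ β a h s)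
      = ∫ w in A..T, (T - w) ^ (α - 1) *
          ((1 / Real.Gamma β) * ∫ u in A..w, (w - u) ^ (β - 1) * g u) := by
    rw [hAdef, hTdef, ← katSubst ρ a t hρ ha hta.le
      (fun w => ((t ^ ρ / ρ) - w) ^ (α - 1) *
        ((1 / Real.Gamma β) * ∫ u in (a ^ ρ / ρ)..w, (w - u) ^ (β - 1) * g u))]
    refine intervalIntegral.integral_congr fun s hs => ?_
    rw [Set.uIcc_of_le hta.le] at hs
    rw [hinner s hs.1 (hs.2.trans htb), keq β s hs.1]
    rw [show t ^ ρ / ρ - s ^ ρ / ρ = (t ^ ρ - s ^ ρ) / ρ by ring]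
    ring
  rw [hmain]
  exact RLfull α β A T hα hβ hAT g hgcont
end

section
/- Let ρ > 0, 0 < a < b < ∞, 0 ≤ γ < 1 and α > γ. Let g : ℝ → ℝ be a function on (a, b] such that t ↦ ((t^ρ − a^ρ)/ρ)^{γ} g(t) extends continuously to [a, b]. Then lim_{t→a+} (^ρI_{a+}^{α} g)(t) = 0. -/
open MeasureTheory Real Set Filter

lemma aux_bound (ρ α γ a b M : ℝ) (hρ : 0 < ρ) (ha : 0 < a)
    (hγ0 : 0 ≤ γ) (hγ1 : γ < 1) (hαγ : γ < α)
    (g G : ℝ → ℝ) (hG : ContinuousOn G (Set.Icc a b))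
    (hM : ∀ x ∈ Set.Icc a b, |G x| ≤ M)
    (hgG : ∀ s ∈ Set.Ioc a b, G s = ((s ^ ρ - a ^ ρ) / ρ) ^ γ * g s)
    (t : ℝ) (ht : t ∈ Set.Ioc a b) :
    ‖∫ s in a..t, s ^ (ρ - 1) * ((t ^ ρ - s ^ ρ) / ρ) ^ (α - 1) * g s‖ ≤
      M * ((1 + 2 ^ (α - 1)) / (1 - γ) + 1 / α) *
        ((t ^ ρ - a ^ ρ) / (2 * ρ)) ^ (α - γ) := by
  obtain ⟨hat, htb⟩ := ht
  have hα : 0 < α := lt_of_le_of_lt hγ0 hαγ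
  have h1γ : 0 < 1 - γ := by linarith
  have ht0 : 0 < t := lt_trans ha hat
  have hA : 0 < a ^ ρ := Real.rpow_pos_of_pos ha ρ
  have hAT : a ^ ρ < t ^ ρ := Real.rpow_lt_rpow ha.le hat hρ
  have hM0 : 0 ≤ M := le_trans (abs_nonneg _) (hM a ⟨le_refl a, le_trans hat.le htb⟩)
  set E : ℝ := (t ^ ρ - a ^ ρ) / (2 * ρ) with hEdef
  have hE : 0 < E := div_pos (sub_pos.mpr hAT) (by positivity)
  set m : ℝ := ((a ^ ρ + t ^ ρ) / 2) ^ ρ⁻¹ with hmdef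
  have hmid : 0 < (a ^ ρ + t ^ ρ) / 2 := by positivity
  have hmρ : m ^ ρ = (a ^ ρ + t ^ ρ) / 2 := Real.rpow_inv_rpow hmid.le hρ.ne'
  have ham : a < m := by
    conv_lhs => rw [← Real.rpow_rpow_inv ha.le hρ.ne']
    rw [hmdef]
    exact Real.rpow_lt_rpow hA.le (by linarith) (by positivity)
  have hmt : m < t := by
    conv_rhs => rw [← Real.rpow_rpow_inv ht0.le hρ.ne']
    rw [hmdef]
    exact Real.rpow_lt_rpow hmid.le (by linarith) (by positivity)
  have hm0 : 0 < m := lt_trans ha ham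
  -- identity g = c^(-γ) * G on (a, b]
  have hgsid : ∀ s ∈ Set.Ioc a b, g s = ((s ^ ρ - a ^ ρ) / ρ) ^ (-γ) * G s := by
    intro s hs
    have hc : 0 < (s ^ ρ - a ^ ρ) / ρ :=
      div_pos (sub_pos.mpr (Real.rpow_lt_rpow ha.le hs.1 hρ)) hρ
    rw [hgG s hs, ← mul_assoc, ← Real.rpow_add hc, neg_add_cancel, Real.rpow_zero, one_mul]
  have hgb : ∀ s ∈ Set.Ioc a b, |g s| ≤ M * ((s ^ ρ - a ^ ρ) / ρ) ^ (-γ) := by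
    intro s hs
    have hc : 0 < (s ^ ρ - a ^ ρ) / ρ :=
      div_pos (sub_pos.mpr (Real.rpow_lt_rpow ha.le hs.1 hρ)) hρ
    rw [hgsid s hs, abs_mul, abs_of_nonneg (Real.rpow_nonneg hc.le _)]
    calc ((s ^ ρ - a ^ ρ) / ρ) ^ (-γ) * |G s|
        ≤ ((s ^ ρ - a ^ ρ) / ρ) ^ (-γ) * M :=
          mul_le_mul_of_nonneg_left (hM s ⟨hs.1.le, hs.2⟩) (Real.rpow_nonneg hc.le _)
      _ = M * ((s ^ ρ - a ^ ρ) / ρ) ^ (-γ) := mul_comm _ _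
  -- derivative of s ↦ (s^ρ - a^ρ)/ρ
  have hders : ∀ s : ℝ, 0 < s →
      HasDerivAt (fun u : ℝ => (u ^ ρ - a ^ ρ) / ρ) (s ^ (ρ - 1)) s := by
    intro s hs
    have h := ((Real.hasDerivAt_rpow_const (x := s) (p := ρ)
      (Or.inl hs.ne')).sub_const (a ^ ρ)).div_const ρ
    convert h using 1
    · rfl
    · rfl
    field_simp
  -- piece 1 antiderivative
  have hΦ₁ : ∀ s ∈ Set.Ioo a m,
      HasDerivAt (fun u : ℝ => ((u ^ ρ - a ^ ρ) / ρ) ^ (1 - γ) / (1 - γ))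
        (s ^ (ρ - 1) * ((s ^ ρ - a ^ ρ) / ρ) ^ (-γ)) s := by
    intro s hs
    have hs0 : 0 < s := lt_trans ha hs.1
    have hc : 0 < (s ^ ρ - a ^ ρ) / ρ :=
      div_pos (sub_pos.mpr (Real.rpow_lt_rpow ha.le hs.1 hρ)) hρ
    have h2 : HasDerivAt (fun x : ℝ => x ^ (1 - γ))
        ((1 - γ) * ((s ^ ρ - a ^ ρ) / ρ) ^ (1 - γ - 1)) ((s ^ ρ - a ^ ρ) / ρ) :=
      Real.hasDerivAt_rpow_const (Or.inl hc.ne')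
    have h3 := (h2.comp s (hders s hs0)).div_const (1 - γ)
    convert h3 using 1
    · rfl
    · rfl
    · rfl
    rw [show (1 : ℝ) - γ - 1 = -γ by ring]
    field_simp
  have hcontinner : ∀ S : Set ℝ, S ⊆ Set.Ici a →
      ContinuousOn (fun u : ℝ => (u ^ ρ - a ^ ρ) / ρ) S := by
    intro S hS
    exact ((continuousOn_id.rpow_const fun x hx =>
      Or.inl (ne_of_gt (lt_of_lt_of_le ha (hS hx)))).sub continuousOn_const).div_const ρ
  have hcontΦ₁ : ContinuousOn (fun u : ℝ => ((u ^ ρ - a ^ ρ) / ρ) ^ (1 - γ) / (1 - γ))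
      (Set.Icc a m) :=
    ((hcontinner _ fun x hx => hx.1).rpow_const fun x _ => Or.inr h1γ.le).div_const (1 - γ)
  have hψ₁nn : ∀ x ∈ Set.Ioo a m, 0 ≤ x ^ (ρ - 1) * ((x ^ ρ - a ^ ρ) / ρ) ^ (-γ) := by
    intro x hx
    have hx0 : 0 < x := lt_trans ha hx.1
    exact mul_nonneg (Real.rpow_nonneg hx0.le _)
      (Real.rpow_nonneg
        (div_pos (sub_pos.mpr (Real.rpow_lt_rpow ha.le hx.1 hρ)) hρ).le _)
  have hψ₁int : IntervalIntegrable
      (fun s : ℝ => s ^ (ρ - 1) * ((s ^ ρ - a ^ ρ) / ρ) ^ (-γ)) volume a m := by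
    rw [intervalIntegrable_iff_integrableOn_Ioo_of_le ham.le]
    exact (intervalIntegral.integrableOn_deriv_of_nonneg hcontΦ₁ hΦ₁ hψ₁nn).mono_set Set.Ioo_subset_Ioc_self
  have hI₁ : ∫ s in a..m, s ^ (ρ - 1) * ((s ^ ρ - a ^ ρ) / ρ) ^ (-γ)
      = E ^ (1 - γ) / (1 - γ) := by
    rw [intervalIntegral.integral_eq_sub_of_hasDeriv_right_of_le ham.le hcontΦ₁
      (fun x hx => (hΦ₁ x hx).hasDerivWithinAt) hψ₁int]
    show ((m ^ ρ - a ^ ρ) / ρ) ^ (1 - γ) / (1 - γ)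
        - ((a ^ ρ - a ^ ρ) / ρ) ^ (1 - γ) / (1 - γ) = E ^ (1 - γ) / (1 - γ)
    rw [hmρ, show ((a ^ ρ + t ^ ρ) / 2 - a ^ ρ) / ρ = E by rw [hEdef]; ring,
      show (a ^ ρ - a ^ ρ) / ρ = (0 : ℝ) by ring, Real.zero_rpow h1γ.ne', zero_div, sub_zero]
  -- piece 2 antiderivative
  have hΦ₂ : ∀ s ∈ Set.Ioo m t,
      HasDerivAt (fun u : ℝ => -(((t ^ ρ - u ^ ρ) / ρ) ^ α) / α)
        (s ^ (ρ - 1) * ((t ^ ρ - s ^ ρ) / ρ) ^ (α - 1)) s := by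
    intro s hs
    have hs0 : 0 < s := lt_trans hm0 hs.1
    have hc : 0 < (t ^ ρ - s ^ ρ) / ρ :=
      div_pos (sub_pos.mpr (Real.rpow_lt_rpow hs0.le hs.2 hρ)) hρ
    have h1 : HasDerivAt (fun u : ℝ => (t ^ ρ - u ^ ρ) / ρ) (-(s ^ (ρ - 1))) s := by
      have h := ((Real.hasDerivAt_rpow_const (x := s) (p := ρ)
        (Or.inl hs0.ne')).const_sub (t ^ ρ)).div_const ρ
      convert h using 1
      · rfl
      · rfl
      field_simp
    have h2 : HasDerivAt (fun x : ℝ => x ^ α)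
        (α * ((t ^ ρ - s ^ ρ) / ρ) ^ (α - 1)) ((t ^ ρ - s ^ ρ) / ρ) :=
      Real.hasDerivAt_rpow_const (Or.inl hc.ne')
    have h3 := ((h2.comp s h1).neg).div_const α
    convert h3 using 1
    · rfl
    · rfl
    · rfl
    field_simp
  have hcontΦ₂ : ContinuousOn (fun u : ℝ => -(((t ^ ρ - u ^ ρ) / ρ) ^ α) / α)
      (Set.Icc m t) := by
    apply ContinuousOn.div_const
    apply ContinuousOn.neg
    apply ContinuousOn.rpow_const _ fun x _ => Or.inr hα.le
    exact (continuousOn_const.sub (continuousOn_id.rpow_const fun x hx =>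
      Or.inl (ne_of_gt (lt_of_lt_of_le hm0 hx.1)))).div_const ρ
  have hψ₂nn : ∀ x ∈ Set.Ioo m t, 0 ≤ x ^ (ρ - 1) * ((t ^ ρ - x ^ ρ) / ρ) ^ (α - 1) := by
    intro x hx
    have hx0 : 0 < x := lt_trans hm0 hx.1
    exact mul_nonneg (Real.rpow_nonneg hx0.le _)
      (Real.rpow_nonneg
        (div_pos (sub_pos.mpr (Real.rpow_lt_rpow hx0.le hx.2 hρ)) hρ).le _)
  have hψ₂int : IntervalIntegrable
      (fun s : ℝ => s ^ (ρ - 1) * ((t ^ ρ - s ^ ρ) / ρ) ^ (α - 1)) volume m t := by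
    rw [intervalIntegrable_iff_integrableOn_Ioo_of_le hmt.le]
    exact (intervalIntegral.integrableOn_deriv_of_nonneg hcontΦ₂ hΦ₂ hψ₂nn).mono_set Set.Ioo_subset_Ioc_self
  have hI₂ : ∫ s in m..t, s ^ (ρ - 1) * ((t ^ ρ - s ^ ρ) / ρ) ^ (α - 1)
      = E ^ α / α := by
    rw [intervalIntegral.integral_eq_sub_of_hasDeriv_right_of_le hmt.le hcontΦ₂
      (fun x hx => (hΦ₂ x hx).hasDerivWithinAt) hψ₂int]
    show -(((t ^ ρ - t ^ ρ) / ρ) ^ α) / α - -(((t ^ ρ - m ^ ρ) / ρ) ^ α) / α = E ^ α / α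
    rw [hmρ, show (t ^ ρ - (a ^ ρ + t ^ ρ) / 2) / ρ = E by rw [hEdef]; ring,
      show (t ^ ρ - t ^ ρ) / ρ = (0 : ℝ) by ring, Real.zero_rpow hα.ne', neg_zero, zero_div]
    ring
  -- continuity of the integrand expressed via G
  set c₁ : ℝ := E ^ (α - 1) + (2 * E) ^ (α - 1) with hc₁def
  have hc₁0 : 0 ≤ c₁ :=
    add_nonneg (Real.rpow_nonneg hE.le _) (Real.rpow_nonneg (by positivity) _)
  set f : ℝ → ℝ := fun s => s ^ (ρ - 1) * ((t ^ ρ - s ^ ρ) / ρ) ^ (α - 1) * g s with hfdef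
  have hfcont : ContinuousOn f (Set.Ioo a t) := by
    have hHcont : ContinuousOn (fun s : ℝ => s ^ (ρ - 1) * ((t ^ ρ - s ^ ρ) / ρ) ^ (α - 1) *
        (((s ^ ρ - a ^ ρ) / ρ) ^ (-γ) * G s)) (Set.Ioo a t) := by
      apply ContinuousOn.mul
      · apply ContinuousOn.mul
        · exact continuousOn_id.rpow_const fun x hx => Or.inl (ne_of_gt (lt_trans ha hx.1))
        · apply ContinuousOn.rpow_const
          · exact (continuousOn_const.sub (continuousOn_id.rpow_const fun x hx =>
              Or.inl (ne_of_gt (lt_trans ha hx.1)))).div_const ρ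
          · intro x hx
            refine Or.inl (ne_of_gt (div_pos (sub_pos.mpr ?_) hρ))
            exact Real.rpow_lt_rpow (lt_trans ha hx.1).le hx.2 hρ
      · apply ContinuousOn.mul
        · apply ContinuousOn.rpow_const ((hcontinner _ fun x hx => hx.1.le) : _)
          intro x hx
          refine Or.inl (ne_of_gt (div_pos (sub_pos.mpr ?_) hρ))
          exact Real.rpow_lt_rpow ha.le hx.1 hρ
        · exact hG.mono fun x hx => ⟨hx.1.le, le_trans hx.2.le htb⟩
    apply hHcont.congr
    intro s hs
    rw [hfdef]
    simp only
    rw [hgsid s ⟨hs.1, le_trans hs.2.le htb⟩]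
  -- pointwise bounds
  have hpb₁ : ∀ s ∈ Set.Ioc a m, ‖f s‖ ≤
      (M * c₁) * (s ^ (ρ - 1) * ((s ^ ρ - a ^ ρ) / ρ) ^ (-γ)) := by
    intro s hs
    have hs0 : 0 < s := lt_trans ha hs.1
    have hsb : s ∈ Set.Ioc a b := ⟨hs.1, le_trans hs.2 (le_trans hmt.le htb)⟩
    have hsm : s ^ ρ ≤ m ^ ρ := Real.rpow_le_rpow hs0.le hs.2 hρ.le
    have hsA : a ^ ρ < s ^ ρ := Real.rpow_lt_rpow ha.le hs.1 hρ
    have hbase : 0 ≤ (t ^ ρ - s ^ ρ) / ρ := by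
      apply div_nonneg _ hρ.le
      rw [hmρ] at hsm
      linarith
    have hx1 : E ≤ (t ^ ρ - s ^ ρ) / ρ := by
      rw [hEdef, div_le_div_iff₀ (by positivity) hρ]
      rw [hmρ] at hsm
      nlinarith
    have hx2 : (t ^ ρ - s ^ ρ) / ρ ≤ 2 * E := by
      have h2E : 2 * E = (t ^ ρ - a ^ ρ) / ρ := by
        rw [hEdef]; field_simp
      rw [h2E]
      gcongr
    have hc₁ : ((t ^ ρ - s ^ ρ) / ρ) ^ (α - 1) ≤ c₁ := by
      rcases le_or_gt α 1 with h' | h'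
      · have h := Real.rpow_le_rpow_of_nonpos hE hx1 (by linarith : α - 1 ≤ 0)
        rw [hc₁def]
        exact le_add_of_le_of_nonneg h (Real.rpow_nonneg (by positivity) _)
      · have h := Real.rpow_le_rpow (le_trans hE.le hx1) hx2 (by linarith : (0:ℝ) ≤ α - 1)
        rw [hc₁def]
        exact h.trans (le_add_of_nonneg_left (Real.rpow_nonneg hE.le _))
    have habs : ‖f s‖ = s ^ (ρ - 1) * ((t ^ ρ - s ^ ρ) / ρ) ^ (α - 1) * |g s| := by
      rw [hfdef]
      simp only [Real.norm_eq_abs, abs_mul]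
      rw [abs_of_nonneg (Real.rpow_nonneg hs0.le _), abs_of_nonneg (Real.rpow_nonneg hbase _)]
    rw [habs]
    calc s ^ (ρ - 1) * ((t ^ ρ - s ^ ρ) / ρ) ^ (α - 1) * |g s|
        ≤ s ^ (ρ - 1) * c₁ * (M * ((s ^ ρ - a ^ ρ) / ρ) ^ (-γ)) := by
          apply mul_le_mul _ (hgb s hsb) (abs_nonneg _)
            (mul_nonneg (Real.rpow_nonneg hs0.le _) hc₁0)
          exact mul_le_mul_of_nonneg_left hc₁ (Real.rpow_nonneg hs0.le _)
      _ = (M * c₁) * (s ^ (ρ - 1) * ((s ^ ρ - a ^ ρ) / ρ) ^ (-γ)) := by ring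
  have hpb₂ : ∀ s ∈ Set.Ioc m t, ‖f s‖ ≤
      (M * E ^ (-γ)) * (s ^ (ρ - 1) * ((t ^ ρ - s ^ ρ) / ρ) ^ (α - 1)) := by
    intro s hs
    have hs0 : 0 < s := lt_trans hm0 hs.1
    have hsb : s ∈ Set.Ioc a b := ⟨lt_trans ham hs.1, le_trans hs.2 htb⟩
    have hsm : m ^ ρ ≤ s ^ ρ := Real.rpow_le_rpow hm0.le hs.1.le hρ.le
    have hst : s ^ ρ ≤ t ^ ρ := Real.rpow_le_rpow hs0.le hs.2 hρ.le
    have hbase : 0 ≤ (t ^ ρ - s ^ ρ) / ρ := div_nonneg (by linarith) hρ.le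
    have hx1 : E ≤ (s ^ ρ - a ^ ρ) / ρ := by
      rw [hEdef, div_le_div_iff₀ (by positivity) hρ]
      rw [hmρ] at hsm
      nlinarith
    have hgE : |g s| ≤ M * E ^ (-γ) := by
      refine (hgb s hsb).trans (mul_le_mul_of_nonneg_left ?_ hM0)
      exact Real.rpow_le_rpow_of_nonpos hE hx1 (by linarith)
    have habs : ‖f s‖ = s ^ (ρ - 1) * ((t ^ ρ - s ^ ρ) / ρ) ^ (α - 1) * |g s| := by
      rw [hfdef]
      simp only [Real.norm_eq_abs, abs_mul]
      rw [abs_of_nonneg (Real.rpow_nonneg hs0.le _), abs_of_nonneg (Real.rpow_nonneg hbase _)]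
    rw [habs]
    calc s ^ (ρ - 1) * ((t ^ ρ - s ^ ρ) / ρ) ^ (α - 1) * |g s|
        ≤ s ^ (ρ - 1) * ((t ^ ρ - s ^ ρ) / ρ) ^ (α - 1) * (M * E ^ (-γ)) := by
          apply mul_le_mul_of_nonneg_left hgE
          exact mul_nonneg (Real.rpow_nonneg hs0.le _) (Real.rpow_nonneg hbase _)
      _ = (M * E ^ (-γ)) * (s ^ (ρ - 1) * ((t ^ ρ - s ^ ρ) / ρ) ^ (α - 1)) := by ring
  -- integrability of f on the two pieces
  have hfm₁ : AEStronglyMeasurable f (volume.restrict (Set.uIoc a m)) := by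
    rw [Set.uIoc_of_le ham.le]
    exact ((hfcont.mono (fun x hx => ⟨hx.1, lt_of_le_of_lt hx.2 hmt⟩ :
      Set.Ioc a m ⊆ Set.Ioo a t)).aestronglyMeasurable measurableSet_Ioc)
  have hfm₂ : AEStronglyMeasurable f (volume.restrict (Set.uIoc m t)) := by
    rw [Set.uIoc_of_le hmt.le,
      ← MeasureTheory.Measure.restrict_congr_set MeasureTheory.Ioo_ae_eq_Ioc]
    exact ((hfcont.mono (fun x hx => ⟨lt_trans ham hx.1, hx.2⟩ :
      Set.Ioo m t ⊆ Set.Ioo a t)).aestronglyMeasurable measurableSet_Ioo)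
  have hae₁ : (fun x => ‖f x‖) ≤ᵐ[volume.restrict (Set.uIoc a m)]
      fun s => (M * c₁) * (s ^ (ρ - 1) * ((s ^ ρ - a ^ ρ) / ρ) ^ (-γ)) := by
    rw [Set.uIoc_of_le ham.le]
    exact (ae_restrict_mem measurableSet_Ioc).mono hpb₁
  have hae₂ : (fun x => ‖f x‖) ≤ᵐ[volume.restrict (Set.uIoc m t)]
      fun s => (M * E ^ (-γ)) * (s ^ (ρ - 1) * ((t ^ ρ - s ^ ρ) / ρ) ^ (α - 1)) := by
    rw [Set.uIoc_of_le hmt.le]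
    exact (ae_restrict_mem measurableSet_Ioc).mono hpb₂
  have hint₁ : IntervalIntegrable f volume a m :=
    IntervalIntegrable.mono_fun' (hψ₁int.const_mul (M * c₁)) hfm₁ hae₁
  have hint₂ : IntervalIntegrable f volume m t :=
    IntervalIntegrable.mono_fun' (hψ₂int.const_mul (M * E ^ (-γ))) hfm₂ hae₂
  -- norm bounds on the pieces
  have hn₁ : ‖∫ s in a..m, f s‖ ≤ (M * c₁) * (E ^ (1 - γ) / (1 - γ)) := by
    have h := intervalIntegral.norm_integral_le_abs_of_norm_le hae₁
      (hψ₁int.const_mul (M * c₁))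
    rwa [intervalIntegral.integral_const_mul, hI₁, abs_of_nonneg
      (mul_nonneg (mul_nonneg hM0 hc₁0)
        (div_nonneg (Real.rpow_nonneg hE.le _) h1γ.le))] at h
  have hn₂ : ‖∫ s in m..t, f s‖ ≤ (M * E ^ (-γ)) * (E ^ α / α) := by
    have h := intervalIntegral.norm_integral_le_abs_of_norm_le hae₂
      (hψ₂int.const_mul (M * E ^ (-γ)))
    rwa [intervalIntegral.integral_const_mul, hI₂, abs_of_nonneg
      (mul_nonneg (mul_nonneg hM0 (Real.rpow_nonneg hE.le _))
        (div_nonneg (Real.rpow_nonneg hE.le _) hα.le))] at h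
  -- combine
  have key1 : c₁ * (E ^ (1 - γ) / (1 - γ)) = (1 + 2 ^ (α - 1)) / (1 - γ) * E ^ (α - γ) := by
    have e1 : (2 * E) ^ (α - 1) = 2 ^ (α - 1) * E ^ (α - 1) :=
      Real.mul_rpow (by norm_num) hE.le
    have e2 : E ^ (α - 1) * E ^ (1 - γ) = E ^ (α - γ) := by
      rw [← Real.rpow_add hE, show α - 1 + (1 - γ) = α - γ by ring]
    calc c₁ * (E ^ (1 - γ) / (1 - γ))
        = (1 + 2 ^ (α - 1)) * (E ^ (α - 1) * E ^ (1 - γ)) / (1 - γ) := by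
          rw [hc₁def, e1]; ring
      _ = (1 + 2 ^ (α - 1)) / (1 - γ) * E ^ (α - γ) := by rw [e2]; ring
  have key2 : E ^ (-γ) * (E ^ α / α) = E ^ (α - γ) / α := by
    rw [← mul_div_assoc, ← Real.rpow_add hE, show -γ + α = α - γ by ring]
  calc ‖∫ s in a..t, s ^ (ρ - 1) * ((t ^ ρ - s ^ ρ) / ρ) ^ (α - 1) * g s‖
      = ‖(∫ s in a..m, f s) + ∫ s in m..t, f s‖ := by
        rw [intervalIntegral.integral_add_adjacent_intervals hint₁ hint₂, hfdef]
    _ ≤ ‖∫ s in a..m, f s‖ + ‖∫ s in m..t, f s‖ := norm_add_le _ _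
    _ ≤ (M * c₁) * (E ^ (1 - γ) / (1 - γ)) + (M * E ^ (-γ)) * (E ^ α / α) :=
        add_le_add hn₁ hn₂
    _ = M * (c₁ * (E ^ (1 - γ) / (1 - γ))) + M * (E ^ (-γ) * (E ^ α / α)) := by ring
    _ = M * ((1 + 2 ^ (α - 1)) / (1 - γ) + 1 / α) * E ^ (α - γ) := by
        rw [key1, key2]; ring


/-- If `g ∈ C_{γ,ρ}[a,b]` and `α > γ`, then `(^ρI_{a+}^α g)(a+) = 0`. -/
theorem katI_tendsto_zero
    (ρ α γ a b : ℝ) (hρ : 0 < ρ) (ha : 0 < a) (hab : a < b)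
    (hγ0 : 0 ≤ γ) (hγ1 : γ < 1) (hαγ : γ < α)
    (g : ℝ → ℝ)
    (hg : ∃ G : ℝ → ℝ, ContinuousOn G (Set.Icc a b) ∧
      ∀ t ∈ Set.Ioc a b, G t = ((t ^ ρ - a ^ ρ) / ρ) ^ γ * g t) :
    Filter.Tendsto (katI ρ α a g) (nhdsWithin a (Set.Ioi a)) (nhds 0) := by
  obtain ⟨G, hGc, hgG⟩ := hg
  obtain ⟨M₀, hM₀⟩ := isCompact_Icc.exists_bound_of_continuousOn hGc
  have hM : ∀ x ∈ Set.Icc a b, |G x| ≤ max M₀ 0 := fun x hx =>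
    le_trans (hM₀ x hx) (le_max_left _ _)
  have hbound : ∀ t ∈ Set.Ioc a b, ‖katI ρ α a g t‖ ≤
      |1 / Real.Gamma α| * (max M₀ 0 * ((1 + 2 ^ (α - 1)) / (1 - γ) + 1 / α)) *
        ((t ^ ρ - a ^ ρ) / (2 * ρ)) ^ (α - γ) := by
    intro t ht
    have h := aux_bound ρ α γ a b (max M₀ 0) hρ ha hγ0 hγ1 hαγ g G hGc hM hgG t ht
    calc ‖katI ρ α a g t‖
        = |1 / Real.Gamma α| * ‖∫ s in a..t, s ^ (ρ - 1) * ((t ^ ρ - s ^ ρ) / ρ) ^ (α - 1) * g s‖ := by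
          rw [katI, norm_mul, Real.norm_eq_abs, Real.norm_eq_abs]
      _ ≤ |1 / Real.Gamma α| * (max M₀ 0 * ((1 + 2 ^ (α - 1)) / (1 - γ) + 1 / α) *
          ((t ^ ρ - a ^ ρ) / (2 * ρ)) ^ (α - γ)) :=
          mul_le_mul_of_nonneg_left h (abs_nonneg _)
      _ = _ := by ring
  apply squeeze_zero_norm'
  · filter_upwards [Ioc_mem_nhdsGT hab] with t ht using hbound t ht
  · have h1 : Tendsto (fun t : ℝ => (t ^ ρ - a ^ ρ) / (2 * ρ)) (nhdsWithin a (Set.Ioi a))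
        (nhds 0) := by
      have hc : ContinuousAt (fun t : ℝ => (t ^ ρ - a ^ ρ) / (2 * ρ)) a :=
        (((Real.continuousAt_rpow_const a ρ (Or.inl ha.ne')).sub continuousAt_const).div_const _)
      have h := hc.tendsto.mono_left (nhdsWithin_le_nhds : nhdsWithin a (Set.Ioi a) ≤ nhds a)
      simpa using h
    have h2 : Tendsto (fun x : ℝ => x ^ (α - γ)) (nhds (0 : ℝ)) (nhds 0) := by
      have hc := (Real.continuousAt_rpow_const 0 (α - γ) (Or.inr (by linarith))).tendsto
      rwa [Real.zero_rpow ((sub_pos.mpr hαγ).ne' : α - γ ≠ 0)] at hc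
    have h := (h2.comp h1).const_mul
      (|1 / Real.Gamma α| * (max M₀ 0 * ((1 + 2 ^ (α - 1)) / (1 - γ) + 1 / α)))
    simpa using h
end

section
/- Let ρ > 0, 0 < a < b < ∞, 0 ≤ γ < 1 and α > 0. Then there exists a constant C ≥ 0 such that for every function g : ℝ → ℝ on (a, b] for which t ↦ ((t^ρ − a^ρ)/ρ)^{γ} g(t) extends continuously to [a, b], and for every t ∈ (a, b], one has ((t^ρ − a^ρ)/ρ)^{γ} |(^ρI_{a+}^{α} g)(t)| ≤ C · sup_{s ∈ (a,b]} ((s^ρ − a^ρ)/ρ)^{γ} |g(s)|; that is, the Katugampola fractional integral ^ρI_{a+}^{α} is a bounded operator on the weighted space C_{γ,ρ}[a,b]. -/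
open MeasureTheory Real Set Filter

private lemma kat_measurable_rpow_const (p : ℝ) : Measurable fun x : ℝ => x ^ p := by
  have hc : ContinuousOn (fun x : ℝ => x ^ p) {(0:ℝ)}ᶜ := fun x hx =>
    (Real.continuousAt_rpow_const x p (Or.inl (by simpa using hx))).continuousWithinAt
  exact measurable_of_measurable_on_compl_singleton 0
    (Continuous.measurable (continuousOn_iff_continuous_restrict.1 hc))

private lemma kat_betaInt {α γ : ℝ} (hα : 0 < α) (hγ0 : 0 ≤ γ) (hγ1 : γ < 1) :
    IntegrableOn (fun v : ℝ => (1-v)^(α-1) * v^(-γ)) (Set.Ioc 0 1) volume := by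
  have hmeas : ∀ s : Set ℝ, AEStronglyMeasurable (fun v : ℝ => (1-v)^(α-1) * v^(-γ))
      (volume.restrict s) := fun s => Measurable.aestronglyMeasurable
    (((kat_measurable_rpow_const (α-1)).comp (measurable_const.sub measurable_id)).mul
      (kat_measurable_rpow_const (-γ)))
  have hunion : Set.Ioc (0:ℝ) (1/2) ∪ Set.Ioc (1/2:ℝ) 1 = Set.Ioc (0:ℝ) 1 :=
    Set.Ioc_union_Ioc_eq_Ioc (by norm_num) (by norm_num)
  rw [← hunion]
  apply MeasureTheory.IntegrableOn.union
  · set C0 : ℝ := max 1 ((1/2:ℝ)^(α-1)) with hC0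
    have base : IntegrableOn (fun v : ℝ => C0 * v^(-γ)) (Set.Ioc 0 (1/2)) volume := by
      have : IntervalIntegrable (fun v : ℝ => v ^ (-γ)) volume 0 (1/2) :=
        intervalIntegral.intervalIntegrable_rpow' (by linarith)
      rw [intervalIntegrable_iff_integrableOn_Ioc_of_le (by norm_num)] at this
      exact this.const_mul C0
    apply Integrable.mono' base (hmeas _)
    rw [ae_restrict_iff' measurableSet_Ioc]
    refine ae_of_all _ (fun v hv => ?_)
    have hv0 : 0 < v := hv.1
    have hv2 : v ≤ 1/2 := hv.2
    have h1v : (1:ℝ)/2 ≤ 1 - v := by linarith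
    have hb : (1-v)^(α-1) ≤ C0 := by
      rcases le_or_gt 1 α with h | h
      · exact le_trans (Real.rpow_le_one (by linarith) (by linarith) (by linarith)) (le_max_left _ _)
      · exact le_trans (Real.rpow_le_rpow_of_nonpos (by norm_num) h1v (by linarith))
          (le_max_right _ _)
    have hn : ‖(1-v)^(α-1) * v^(-γ)‖ = (1-v)^(α-1) * v^(-γ) := by
      rw [Real.norm_eq_abs, abs_of_nonneg]
      exact mul_nonneg (Real.rpow_nonneg (by linarith) _) (Real.rpow_nonneg hv0.le _)
    rw [hn]
    exact mul_le_mul_of_nonneg_right hb (Real.rpow_nonneg hv0.le _)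
  · set C1 : ℝ := ((1/2:ℝ))^(-γ) with hC1
    have base : IntegrableOn (fun v : ℝ => C1 * (1-v)^(α-1)) (Set.Ioc (1/2) 1) volume := by
      have h0 : IntervalIntegrable (fun v : ℝ => v ^ (α-1)) volume 0 (1/2) :=
        intervalIntegral.intervalIntegrable_rpow' (by linarith)
      have h1 := (h0.comp_sub_left 1).symm
      norm_num at h1
      rw [intervalIntegrable_iff_integrableOn_Ioc_of_le (by norm_num)] at h1
      exact h1.const_mul C1
    apply Integrable.mono' base (hmeas _)
    rw [ae_restrict_iff' measurableSet_Ioc]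
    refine ae_of_all _ (fun v hv => ?_)
    have hv0 : (1:ℝ)/2 < v := hv.1
    have hv1 : v ≤ 1 := hv.2
    have hb : v^(-γ) ≤ C1 :=
      Real.rpow_le_rpow_of_nonpos (by norm_num) hv0.le (by linarith)
    have hn : ‖(1-v)^(α-1) * v^(-γ)‖ = (1-v)^(α-1) * v^(-γ) := by
      rw [Real.norm_eq_abs, abs_of_nonneg]
      exact mul_nonneg (Real.rpow_nonneg (by linarith) _) (Real.rpow_nonneg (by linarith) _)
    rw [hn, mul_comm ((1-v)^(α-1)) _]
    exact mul_le_mul_of_nonneg_right hb (Real.rpow_nonneg (by linarith) _)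

/-- scaling substitution `u = T v`. -/
private lemma kat_core {α γ T : ℝ} (hT : 0 < T)
    (hbeta : IntegrableOn (fun v : ℝ => (1-v)^(α-1) * v^(-γ)) (Set.Ioc 0 1) volume) :
    IntegrableOn (fun u : ℝ => (T-u)^(α-1) * u^(-γ)) (Set.Ioc 0 T) volume ∧
    (∫ u in Set.Ioc 0 T, (T-u)^(α-1) * u^(-γ)) =
      T^(α-γ) * ∫ v in Set.Ioc (0:ℝ) 1, (1-v)^(α-1) * v^(-γ) := by
  set ψ : ℝ → ℝ := fun u => (T-u)^(α-1) * u^(-γ) with hψ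
  set f : ℝ → ℝ := fun v => T * v with hf
  have hderiv : ∀ v ∈ Set.Ioc (0:ℝ) 1, HasDerivWithinAt f T (Set.Ioc 0 1) v := by
    intro v hv
    simpa using (((hasDerivAt_id v).const_mul T).hasDerivWithinAt :
      HasDerivWithinAt f (T * 1) (Set.Ioc 0 1) v)
  have hinj : Set.InjOn f (Set.Ioc 0 1) := fun x _ y _ h => mul_left_cancel₀ hT.ne' h
  have himg : f '' Set.Ioc 0 1 = Set.Ioc 0 T := by
    rw [hf]
    have := Set.image_mul_left_Ioc hT 0 1
    simpa using this
  have hcongr : ∀ v ∈ Set.Ioc (0:ℝ) 1,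
      |T| • ψ (f v) = T^(α-γ) * ((1-v)^(α-1) * v^(-γ)) := by
    intro v hv
    have hv0 : 0 < v := hv.1
    have hv1 : v ≤ 1 := hv.2
    have h1 : T - T * v = T * (1 - v) := by ring
    rw [smul_eq_mul, abs_of_pos hT, hψ]
    simp only [hf, h1]
    rw [Real.mul_rpow hT.le (by linarith), Real.mul_rpow hT.le hv0.le]
    rw [show T^(α-γ) = T * T^(α-1) * T^(-γ) by
      rw [show α - γ = 1 + (α-1) + (-γ) by ring, Real.rpow_add hT, Real.rpow_add hT,
        Real.rpow_one]]
    ring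
  constructor
  · rw [← himg, integrableOn_image_iff_integrableOn_abs_deriv_smul measurableSet_Ioc hderiv hinj]
    exact MeasureTheory.IntegrableOn.congr_fun (hbeta.const_mul (T^(α-γ)))
      (fun v hv => (hcongr v hv).symm) measurableSet_Ioc
  · rw [← himg, integral_image_eq_integral_abs_deriv_smul measurableSet_Ioc hderiv hinj,
      setIntegral_congr_fun measurableSet_Ioc hcongr, integral_const_mul]

/-- substitution `u = (s^ρ - a^ρ)/ρ`. -/
private lemma kat_subst {ρ a t : ℝ} (hρ : 0 < ρ) (ha : 0 < a) (hat : a < t) (ψ : ℝ → ℝ) :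
    ((∫ s in Set.Ioc a t, s^(ρ-1) * ψ ((s^ρ - a^ρ)/ρ)) =
      ∫ u in Set.Ioc (0:ℝ) ((t^ρ - a^ρ)/ρ), ψ u) ∧
    (IntegrableOn ψ (Set.Ioc 0 ((t^ρ - a^ρ)/ρ)) volume ↔
      IntegrableOn (fun s => s^(ρ-1) * ψ ((s^ρ - a^ρ)/ρ)) (Set.Ioc a t) volume) := by
  set f : ℝ → ℝ := fun s => (s^ρ - a^ρ)/ρ with hf
  have hpos : ∀ s ∈ Set.Ioc a t, 0 < s := fun s hs => lt_trans ha hs.1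
  have hderiv : ∀ s ∈ Set.Ioc a t, HasDerivWithinAt f (s^(ρ-1)) (Set.Ioc a t) s := by
    intro s hs
    have h := Real.hasDerivAt_rpow_const (x := s) (p := ρ) (Or.inl (hpos s hs).ne')
    have h2 : HasDerivAt f (ρ * s^(ρ-1) / ρ) s := (h.sub_const (a^ρ)).div_const ρ
    rw [show ρ * s ^ (ρ-1) / ρ = s ^ (ρ-1) by field_simp] at h2
    exact h2.hasDerivWithinAt
  have hmono : Set.InjOn f (Set.Ioc a t) := by
    intro x hx y hy hxy
    by_contra hne
    rcases lt_or_gt_of_ne hne with h | h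
    · have : f x < f y := by
        apply div_lt_div_of_pos_right ?_ hρ
        · exact sub_lt_sub_right (Real.rpow_lt_rpow (hpos x hx).le h hρ) _
      exact absurd hxy this.ne
    · have : f y < f x := by
        apply div_lt_div_of_pos_right ?_ hρ
        · exact sub_lt_sub_right (Real.rpow_lt_rpow (hpos y hy).le h hρ) _
      exact absurd hxy this.ne'
  have hfa : f a = 0 := by simp [hf]
  have himg : f '' Set.Ioc a t = Set.Ioc 0 ((t^ρ - a^ρ)/ρ) := by
    apply Set.Subset.antisymm
    · rintro u ⟨s, hs, rfl⟩
      constructor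
      · have : a^ρ < s^ρ := Real.rpow_lt_rpow ha.le hs.1 hρ
        exact div_pos (by linarith) hρ
      · have h1 : s^ρ ≤ t^ρ := Real.rpow_le_rpow (hpos s hs).le hs.2 hρ.le
        exact (div_le_div_iff_of_pos_right hρ).2 (by linarith)
    · have hcont : ContinuousOn f (Set.Icc a t) := by
        apply ContinuousOn.div_const
        apply ContinuousOn.sub _ continuousOn_const
        exact ContinuousOn.rpow_const continuousOn_id
          (fun x hx => Or.inl (lt_of_lt_of_le ha hx.1).ne')
      have := intermediate_value_Ioc hat.le hcont
      rw [hfa] at this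
      exact this
  constructor
  · rw [← himg, integral_image_eq_integral_abs_deriv_smul measurableSet_Ioc hderiv hmono]
    apply setIntegral_congr_fun measurableSet_Ioc
    intro s hs
    simp only [hf, smul_eq_mul, abs_of_nonneg (Real.rpow_nonneg (hpos s hs).le (ρ-1))]
  · rw [← himg, integrableOn_image_iff_integrableOn_abs_deriv_smul measurableSet_Ioc hderiv hmono]
    constructor
    · intro h
      exact h.congr_fun (fun s hs => by
        simp only [hf, smul_eq_mul, abs_of_nonneg (Real.rpow_nonneg (hpos s hs).le (ρ-1))]) measurableSet_Ioc
    · intro h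
      exact h.congr_fun (fun s hs => by
        simp only [hf, smul_eq_mul, abs_of_nonneg (Real.rpow_nonneg (hpos s hs).le (ρ-1))]) measurableSet_Ioc


/-- The Katugampola fractional integral `^ρI_{a+}^α` is a bounded operator on the
weighted space `C_{γ,ρ}[a,b]`. -/
theorem katI_bounded_weighted
    (ρ α γ a b : ℝ) (hρ : 0 < ρ) (ha : 0 < a) (hab : a < b)
    (hγ0 : 0 ≤ γ) (hγ1 : γ < 1) (hα : 0 < α) :
    ∃ C : ℝ, 0 ≤ C ∧
      ∀ g : ℝ → ℝ,
        (∃ G : ℝ → ℝ, ContinuousOn G (Set.Icc a b) ∧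
          ∀ t ∈ Set.Ioc a b, G t = ((t ^ ρ - a ^ ρ) / ρ) ^ γ * g t) →
        ∀ t ∈ Set.Ioc a b,
          ((t ^ ρ - a ^ ρ) / ρ) ^ γ * |katI ρ α a g t|
            ≤ C * sSup ((fun s => ((s ^ ρ - a ^ ρ) / ρ) ^ γ * |g s|) '' Set.Ioc a b) := by
  have hΓ : 0 < Real.Gamma α := Real.Gamma_pos_of_pos hα
  set K : ℝ := ∫ v in Set.Ioc (0:ℝ) 1, (1-v)^(α-1) * v^(-γ) with hKdef
  have hK0 : 0 ≤ K := setIntegral_nonneg measurableSet_Ioc (fun v hv =>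
    mul_nonneg (Real.rpow_nonneg (by linarith [hv.2]) _) (Real.rpow_nonneg hv.1.le _))
  set Tb : ℝ := (b^ρ - a^ρ)/ρ with hTbdef
  have hTb : 0 < Tb := by
    have : a^ρ < b^ρ := Real.rpow_lt_rpow ha.le hab hρ
    exact div_pos (by linarith) hρ
  refine ⟨(1/Real.Gamma α) * Tb^α * K, ?_, ?_⟩
  · exact mul_nonneg (mul_nonneg (by positivity) (Real.rpow_nonneg hTb.le _)) hK0
  intro g hGex t ht
  obtain ⟨G, hGcont, hGg⟩ := hGex
  set M : ℝ := sSup ((fun s => ((s ^ ρ - a ^ ρ) / ρ) ^ γ * |g s|) '' Set.Ioc a b) with hMdef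
  -- BddAbove
  obtain ⟨C0, hC0⟩ := (isCompact_Icc (a := a) (b := b)).exists_bound_of_continuousOn hGcont
  have hBdd : BddAbove ((fun s => ((s ^ ρ - a ^ ρ) / ρ) ^ γ * |g s|) '' Set.Ioc a b) := by
    refine ⟨C0, ?_⟩
    rintro y ⟨s, hs, rfl⟩
    have hw : (0:ℝ) ≤ ((s ^ ρ - a ^ ρ) / ρ) ^ γ := Real.rpow_nonneg
      (by
        have : a^ρ ≤ s^ρ := Real.rpow_le_rpow ha.le hs.1.le hρ.le
        exact div_nonneg (by linarith) hρ.le) _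
    calc ((s ^ ρ - a ^ ρ) / ρ) ^ γ * |g s| = |((s ^ ρ - a ^ ρ) / ρ) ^ γ * g s| := by
          rw [abs_mul, abs_of_nonneg hw]
      _ = |G s| := by rw [hGg s hs]
      _ ≤ C0 := by simpa using hC0 s ⟨hs.1.le, hs.2⟩
  have hgle : ∀ s ∈ Set.Ioc a b, ((s ^ ρ - a ^ ρ) / ρ) ^ γ * |g s| ≤ M :=
    fun s hs => le_csSup hBdd ⟨s, hs, rfl⟩
  have hM0 : 0 ≤ M := by
    refine le_trans ?_ (hgle b ⟨hab, le_refl b⟩)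
    positivity
  -- setup for t
  have hat : a < t := ht.1
  have htb : t ≤ b := ht.2
  set T : ℝ := (t^ρ - a^ρ)/ρ with hTdef
  have hT : 0 < T := by
    have : a^ρ < t^ρ := Real.rpow_lt_rpow ha.le hat hρ
    exact div_pos (by linarith) hρ
  set ψ : ℝ → ℝ := fun u => (T-u)^(α-1) * u^(-γ) with hψdef
  have hbeta := kat_betaInt hα hγ0 hγ1 (γ := γ)
  have hcore := kat_core hT hbeta
  have hsub := kat_subst hρ ha hat ψ
  -- integrand F and its bound
  set F : ℝ → ℝ := fun s => s ^ (ρ - 1) * ((t ^ ρ - s ^ ρ) / ρ) ^ (α - 1) * g s with hFdef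
  have hφint : IntegrableOn (fun s => M * (s^(ρ-1) * ψ ((s^ρ - a^ρ)/ρ))) (Set.Ioc a t) volume :=
    (hsub.2.mp hcore.1).const_mul M
  -- pointwise bound
  have hptwise : ∀ s ∈ Set.Ioc a t, |F s| ≤ M * (s^(ρ-1) * ψ ((s^ρ - a^ρ)/ρ)) := by
    intro s hs
    have hs0 : 0 < s := lt_trans ha hs.1
    have hX0 : 0 < (s^ρ - a^ρ)/ρ := by
      have : a^ρ < s^ρ := Real.rpow_lt_rpow ha.le hs.1 hρ
      exact div_pos (by linarith) hρ
    have hB0 : 0 ≤ (t^ρ - s^ρ)/ρ := by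
      have : s^ρ ≤ t^ρ := Real.rpow_le_rpow hs0.le hs.2 hρ.le
      exact div_nonneg (by linarith) hρ.le
    have hBX : (t^ρ - s^ρ)/ρ = T - (s^ρ - a^ρ)/ρ := by rw [hTdef]; ring
    have hgs : |g s| ≤ M * ((s^ρ - a^ρ)/ρ)^(-γ) := by
      have h1 := hgle s ⟨hs.1, le_trans hs.2 htb⟩
      have hw : 0 < ((s ^ ρ - a ^ ρ) / ρ) ^ γ := Real.rpow_pos_of_pos hX0 _
      have h2 : |g s| ≤ M / ((s ^ ρ - a ^ ρ) / ρ) ^ γ :=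
        (le_div_iff₀ hw).2 (by rw [mul_comm]; exact h1)
      rwa [div_eq_mul_inv, ← Real.rpow_neg hX0.le] at h2
    have habs : |F s| = s^(ρ-1) * ((t^ρ - s^ρ)/ρ)^(α-1) * |g s| := by
      rw [hFdef]
      rw [abs_mul, abs_mul, abs_of_nonneg (Real.rpow_nonneg hs0.le (ρ-1)),
        abs_of_nonneg (Real.rpow_nonneg hB0 (α-1))]
    rw [habs, hψdef]
    calc s^(ρ-1) * ((t^ρ - s^ρ)/ρ)^(α-1) * |g s|
        ≤ s^(ρ-1) * ((t^ρ - s^ρ)/ρ)^(α-1) * (M * ((s^ρ - a^ρ)/ρ)^(-γ)) := by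
          apply mul_le_mul_of_nonneg_left hgs
          exact mul_nonneg (Real.rpow_nonneg hs0.le _) (Real.rpow_nonneg hB0 _)
      _ = M * (s^(ρ-1) * ((T - (s^ρ - a^ρ)/ρ))^(α-1) * ((s^ρ - a^ρ)/ρ)^(-γ)) := by
          rw [← hBX]; ring
      _ = M * (s^(ρ-1) * ((fun u => (T-u)^(α-1) * u^(-γ)) ((s^ρ - a^ρ)/ρ))) := by
          ring
  -- integral bound
  have hIabs : |katI ρ α a g t| ≤ (1/Real.Gamma α) * ∫ s in Set.Ioc a t, |F s| := by
    have : katI ρ α a g t = (1/Real.Gamma α) * ∫ s in Set.Ioc a t, F s := by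
      rw [katI, intervalIntegral.integral_of_le hat.le]
    rw [this, abs_mul, abs_of_pos (by positivity : (0:ℝ) < 1/Real.Gamma α)]
    apply mul_le_mul_of_nonneg_left _ (by positivity)
    have := MeasureTheory.norm_integral_le_integral_norm (μ := volume.restrict (Set.Ioc a t)) F
    simpa [Real.norm_eq_abs] using this
  have hmono : (∫ s in Set.Ioc a t, |F s|) ≤
      ∫ s in Set.Ioc a t, M * (s^(ρ-1) * ψ ((s^ρ - a^ρ)/ρ)) := by
    apply integral_mono_of_nonneg (ae_of_all _ fun s => abs_nonneg _) hφint
    rw [Filter.EventuallyLE, ae_restrict_iff' measurableSet_Ioc]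
    exact ae_of_all _ hptwise
  have hval : (∫ s in Set.Ioc a t, M * (s^(ρ-1) * ψ ((s^ρ - a^ρ)/ρ))) = M * (T^(α-γ) * K) := by
    rw [integral_const_mul, hsub.1, hcore.2]
  -- final assembly
  have hkey : |katI ρ α a g t| ≤ (1/Real.Gamma α) * (M * (T^(α-γ) * K)) := by
    calc |katI ρ α a g t| ≤ (1/Real.Gamma α) * ∫ s in Set.Ioc a t, |F s| := hIabs
      _ ≤ (1/Real.Gamma α) * (M * (T^(α-γ) * K)) := by
          rw [← hval]
          exact mul_le_mul_of_nonneg_left hmono (by positivity)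
  have hwT : ((t ^ ρ - a ^ ρ) / ρ) ^ γ = T^γ := rfl
  calc ((t ^ ρ - a ^ ρ) / ρ) ^ γ * |katI ρ α a g t|
      ≤ T^γ * ((1/Real.Gamma α) * (M * (T^(α-γ) * K))) := by
        rw [hwT]
        exact mul_le_mul_of_nonneg_left hkey (Real.rpow_nonneg hT.le _)
    _ = (1/Real.Gamma α) * T^α * K * M := by
        rw [show T^α = T^γ * T^(α-γ) by
          rw [← Real.rpow_add hT]; ring_nf]
        ring
    _ ≤ (1/Real.Gamma α) * Tb^α * K * M := by
        have hTTb : T ≤ Tb := by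
          have : t^ρ ≤ b^ρ := Real.rpow_le_rpow (lt_trans ha hat).le htb hρ.le
          exact (div_le_div_iff_of_pos_right hρ).2 (by linarith)
        have : T^α ≤ Tb^α := Real.rpow_le_rpow hT.le hTTb hα.le
        apply mul_le_mul_of_nonneg_right _ hM0
        apply mul_le_mul_of_nonneg_right _ hK0
        exact mul_le_mul_of_nonneg_left this (by positivity)
    _ = (1/Real.Gamma α) * Tb^α * K * M := rfl
end

section
/- Let ρ > 0, 0 < a, 0 < α < 1, 0 ≤ β ≤ 1, γ = α + β(1 − α), λ > 0, μ ≥ 0 and m > 1 with m > (1 + μ)/(1 − α). Set ν = (α + μ)/(1 − m) and assume ν > γ − 1. Define y(t) = [Γ(ν + 1)/(λ Γ(ν − α + 1))]^{1/(m−1)} · ((t^ρ − a^ρ)/ρ)^{ν}. Then lim_{t→a+} (^ρI_{a+}^{1−γ} y)(t) = 0; that is, y satisfies the initial condition (^ρI_{a+}^{1−γ} y)(a+) = 0. -/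
open MeasureTheory Real Set Filter

lemma aux_rpow_bounds {a e x : ℝ} (ha : 0 < a) (hx : a ≤ x) (hx' : x ≤ a + 1) :
    min (a ^ e) ((a + 1) ^ e) ≤ x ^ e ∧ x ^ e ≤ max (a ^ e) ((a + 1) ^ e) := by
  rcases le_or_gt 0 e with he | he
  · exact ⟨(min_le_left _ _).trans (Real.rpow_le_rpow ha.le hx he),
      (Real.rpow_le_rpow (ha.le.trans hx) hx' he).trans (le_max_right _ _)⟩
  · exact ⟨(min_le_right _ _).trans (Real.rpow_le_rpow_of_nonpos (ha.trans_le hx) hx' he.le),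
      (Real.rpow_le_rpow_of_nonpos ha hx he.le).trans (le_max_left _ _)⟩

lemma aux_mvt {ρ a x y : ℝ} (hρ : 0 < ρ) (ha : 0 < a) (hax : a ≤ x) (hxy : x < y)
    (hy : y ≤ a + 1) :
    ρ * min (a ^ (ρ - 1)) ((a + 1) ^ (ρ - 1)) * (y - x) ≤ y ^ ρ - x ^ ρ := by
  have hx0 : 0 < x := ha.trans_le hax
  have hcont : ContinuousOn (fun s : ℝ => s ^ ρ) (Icc x y) := fun z hz =>
    (Real.continuousAt_rpow_const z ρ (Or.inl (ne_of_gt (hx0.trans_le hz.1)))).continuousWithinAt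
  have hdiff : DifferentiableOn ℝ (fun s : ℝ => s ^ ρ) (Ioo x y) := fun z hz =>
    (Real.hasDerivAt_rpow_const (p := ρ)
      (Or.inl (ne_of_gt (hx0.trans hz.1)))).differentiableAt.differentiableWithinAt
  obtain ⟨c, hc, hder⟩ := exists_deriv_eq_slope (fun s : ℝ => s ^ ρ) hxy hcont hdiff
  have hc0 : 0 < c := hx0.trans hc.1
  have hderc : deriv (fun s : ℝ => s ^ ρ) c = ρ * c ^ (ρ - 1) :=
    Real.deriv_rpow_const c ρ
  have hmin : min (a ^ (ρ - 1)) ((a + 1) ^ (ρ - 1)) ≤ c ^ (ρ - 1) :=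
    (aux_rpow_bounds ha (hax.trans hc.1.le) (hc.2.le.trans hy)).1
  have hslope : ρ * min (a ^ (ρ - 1)) ((a + 1) ^ (ρ - 1)) ≤ (y ^ ρ - x ^ ρ) / (y - x) := by
    rw [← hder, hderc]
    nlinarith
  have hyx : 0 < y - x := by linarith
  calc ρ * min (a ^ (ρ - 1)) ((a + 1) ^ (ρ - 1)) * (y - x)
      ≤ (y ^ ρ - x ^ ρ) / (y - x) * (y - x) := by nlinarith
    _ = y ^ ρ - x ^ ρ := by field_simp


set_option maxHeartbeats 1000000 in
/-- The exact solution `y(t) = [Γ(ν+1)/(λ Γ(ν-α+1))]^(1/(m-1)) ((t^ρ-a^ρ)/ρ)^ν`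
satisfies the initial condition `(^ρI_{a+}^{1-γ} y)(a+) = 0`. -/
theorem exact_solution_initial_condition
    (ρ a α β γ lam μ m ν : ℝ) (hρ : 0 < ρ) (ha : 0 < a)
    (hα0 : 0 < α) (hα1 : α < 1) (hβ0 : 0 ≤ β) (hβ1 : β ≤ 1)
    (hγ : γ = α + β * (1 - α))
    (hlam : 0 < lam) (hμ : 0 ≤ μ) (hm1 : 1 < m) (hm2 : (1 + μ) / (1 - α) < m)
    (hν : ν = (α + μ) / (1 - m)) (hνγ : γ - 1 < ν) :
    Filter.Tendsto
      (katI ρ (1 - γ) a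
        (fun u => (Real.Gamma (ν + 1) / (lam * Real.Gamma (ν - α + 1))) ^ (1 / (m - 1)) *
          ((u ^ ρ - a ^ ρ) / ρ) ^ ν))
      (nhdsWithin a (Set.Ioi a)) (nhds 0) := by
  have h1α : 0 < 1 - α := by linarith
  have hγ0 : 0 < γ := by nlinarith [mul_nonneg hβ0 h1α.le]
  have hγ1 : γ ≤ 1 := by nlinarith [mul_nonneg hβ0 h1α.le, mul_nonneg (sub_nonneg.mpr hβ1) h1α.le]
  rcases eq_or_lt_of_le hγ1 with hγe | hγlt
  · have : katI ρ (1 - γ) a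
        (fun u => (Real.Gamma (ν + 1) / (lam * Real.Gamma (ν - α + 1))) ^ (1 / (m - 1)) *
          ((u ^ ρ - a ^ ρ) / ρ) ^ ν) = fun _ => 0 := by
      funext t
      simp [katI, hγe, Real.Gamma_zero]
    rw [this]
    exact tendsto_const_nhds
  -- main case γ < 1
  have hν0 : ν < 0 := by
    rw [hν]
    exact div_neg_of_pos_of_neg (by linarith) (by linarith)
  have hν1 : (-1 : ℝ) < ν := by linarith
  have hνp : 0 < ν + 1 := by linarith
  have h1γ : 0 < 1 - γ := by linarith
  have hp : 0 < ν + 1 - γ := by linarith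
  set c₀ : ℝ := (Real.Gamma (ν + 1) / (lam * Real.Gamma (ν - α + 1))) ^ (1 / (m - 1)) with hc₀
  set cmin : ℝ := min (a ^ (ρ - 1)) ((a + 1) ^ (ρ - 1)) with hcmin
  set cmax : ℝ := max (a ^ (ρ - 1)) ((a + 1) ^ (ρ - 1)) with hcmax
  have hcmin0 : 0 < cmin :=
    lt_min (Real.rpow_pos_of_pos ha _) (Real.rpow_pos_of_pos (by linarith) _)
  have hcmax0 : 0 ≤ cmax := le_trans hcmin0.le (min_le_left _ _ |>.trans (le_max_left _ _))
  set K : ℝ := |c₀| * cmax * cmin ^ (-γ) * cmin ^ ν with hK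
  have hK0 : 0 ≤ K := by positivity
  set c₁ : ℝ := |1 / Real.Gamma (1 - γ)| with hc₁
  have hc₁0 : 0 ≤ c₁ := abs_nonneg _
  set p : ℝ := ν + 1 - γ with hpdef
  set C : ℝ := c₁ * K * ((2 : ℝ) ^ γ / (ν + 1) + ((2 : ℝ) ^ ν)⁻¹ / (1 - γ)) with hC
  apply squeeze_zero_norm' (a := fun t => C * (t - a) ^ p)
  · -- eventual bound
    filter_upwards [Ioo_mem_nhdsGT_of_mem (⟨le_refl a, lt_add_one a⟩ : a ∈ Ico a (a + 1))]
      with t ht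
    obtain ⟨hat, hta⟩ := ht
    have hε : 0 < t - a := by linarith
    -- pointwise bound on the integrand
    set f : ℝ → ℝ := fun s =>
      s ^ (ρ - 1) * ((t ^ ρ - s ^ ρ) / ρ) ^ ((1 - γ) - 1) * (c₀ * ((s ^ ρ - a ^ ρ) / ρ) ^ ν)
      with hf
    set g : ℝ → ℝ := fun s =>
      K * (((t - a) / 2) ^ (-γ) * (s - a) ^ ν + ((t - a) / 2) ^ ν * (t - s) ^ (-γ)) with hg
    have hexp : (1 - γ) - 1 = -γ := by ring
    have hbd : ∀ s ∈ Ioc a t, |f s| ≤ g s := by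
      intro s hs
      obtain ⟨hs1, hs2⟩ := hs
      have hs0 : 0 < s := ha.trans hs1
      have hsa1 : s ≤ a + 1 := hs2.trans hta.le
      have hA : s ^ (ρ - 1) ≤ cmax := (aux_rpow_bounds ha hs1.le hsa1).2
      have hA0 : 0 ≤ s ^ (ρ - 1) := Real.rpow_nonneg hs0.le _
      have hB : ((s ^ ρ - a ^ ρ) / ρ) ^ ν ≤ cmin ^ ν * (s - a) ^ ν := by
        have h1 : cmin * (s - a) ≤ (s ^ ρ - a ^ ρ) / ρ := by
          have h0 := aux_mvt hρ ha (le_refl a) hs1 hsa1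
          rw [le_div_iff₀ hρ]
          have he : cmin * (s - a) * ρ = ρ * cmin * (s - a) := by ring
          linarith
        have h2 : 0 < cmin * (s - a) := mul_pos hcmin0 (by linarith)
        calc ((s ^ ρ - a ^ ρ) / ρ) ^ ν ≤ (cmin * (s - a)) ^ ν :=
              Real.rpow_le_rpow_of_nonpos h2 h1 hν0.le
          _ = cmin ^ ν * (s - a) ^ ν := Real.mul_rpow hcmin0.le (by linarith)
      have hB0 : 0 ≤ ((s ^ ρ - a ^ ρ) / ρ) ^ ν := by
        apply Real.rpow_nonneg
        have h0 : a ^ ρ ≤ s ^ ρ := Real.rpow_le_rpow ha.le hs1.le hρ.le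
        exact div_nonneg (by linarith) hρ.le
      have hC' : ((t ^ ρ - s ^ ρ) / ρ) ^ (-γ) ≤ cmin ^ (-γ) * (t - s) ^ (-γ) := by
        rcases eq_or_lt_of_le hs2 with rfl | hst
        · simp [Real.zero_rpow (neg_ne_zero.mpr hγ0.ne')]
        · have h1 : cmin * (t - s) ≤ (t ^ ρ - s ^ ρ) / ρ := by
            have h0 := aux_mvt hρ ha hs1.le hst hta.le
            rw [le_div_iff₀ hρ]
            have he : cmin * (t - s) * ρ = ρ * cmin * (t - s) := by ring
            linarith
          have h2 : 0 < cmin * (t - s) := mul_pos hcmin0 (by linarith)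
          calc ((t ^ ρ - s ^ ρ) / ρ) ^ (-γ) ≤ (cmin * (t - s)) ^ (-γ) :=
                Real.rpow_le_rpow_of_nonpos h2 h1 (by linarith)
            _ = cmin ^ (-γ) * (t - s) ^ (-γ) := Real.mul_rpow hcmin0.le (by linarith)
      have hC0 : 0 ≤ ((t ^ ρ - s ^ ρ) / ρ) ^ (-γ) := by
        apply Real.rpow_nonneg
        have h0 : s ^ ρ ≤ t ^ ρ := Real.rpow_le_rpow hs0.le hs2 hρ.le
        exact div_nonneg (by linarith) hρ.le
      have step1 : |f s| ≤ (|c₀| * cmax * cmin ^ (-γ) * cmin ^ ν) * ((t - s) ^ (-γ) * (s - a) ^ ν) := by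
        have : |f s| = s ^ (ρ - 1) * ((t ^ ρ - s ^ ρ) / ρ) ^ (-γ) *
            (|c₀| * ((s ^ ρ - a ^ ρ) / ρ) ^ ν) := by
          rw [hf, hexp]
          rw [abs_mul, abs_mul, abs_mul]
          rw [abs_of_nonneg hA0, abs_of_nonneg hB0, abs_of_nonneg hC0]
        rw [this]
        have hts0 : 0 ≤ (t - s) ^ (-γ) := Real.rpow_nonneg (by linarith) _
        have hsa0 : 0 ≤ (s - a) ^ ν := Real.rpow_nonneg (by linarith) _
        calc s ^ (ρ - 1) * ((t ^ ρ - s ^ ρ) / ρ) ^ (-γ) * (|c₀| * ((s ^ ρ - a ^ ρ) / ρ) ^ ν)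
            ≤ cmax * (cmin ^ (-γ) * (t - s) ^ (-γ)) * (|c₀| * (cmin ^ ν * (s - a) ^ ν)) := by
              apply mul_le_mul
              · exact mul_le_mul hA hC' hC0 hcmax0
              · exact mul_le_mul_of_nonneg_left hB (abs_nonneg _)
              · positivity
              · positivity
          _ = (|c₀| * cmax * cmin ^ (-γ) * cmin ^ ν) * ((t - s) ^ (-γ) * (s - a) ^ ν) := by ring
      have hhalf : (0 : ℝ) < (t - a) / 2 := by linarith
      have hga0 : 0 ≤ ((t - a) / 2) ^ (-γ) := Real.rpow_nonneg hhalf.le _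
      have hgb0 : 0 ≤ ((t - a) / 2) ^ ν := Real.rpow_nonneg hhalf.le _
      have hts0 : 0 ≤ (t - s) ^ (-γ) := Real.rpow_nonneg (by linarith) _
      have hsa0 : 0 ≤ (s - a) ^ ν := Real.rpow_nonneg (by linarith) _
      refine step1.trans ?_
      simp only [hg, hK, mul_add]
      rcases le_or_gt s (a + (t - a) / 2) with hmid | hmid
      · have h1 : (t - s) ^ (-γ) ≤ ((t - a) / 2) ^ (-γ) :=
          Real.rpow_le_rpow_of_nonpos hhalf (by linarith) (by linarith)
        have : |c₀| * cmax * cmin ^ (-γ) * cmin ^ ν * ((t - s) ^ (-γ) * (s - a) ^ ν) ≤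
            |c₀| * cmax * cmin ^ (-γ) * cmin ^ ν * (((t - a) / 2) ^ (-γ) * (s - a) ^ ν) := by
          apply mul_le_mul_of_nonneg_left _ (by positivity)
          exact mul_le_mul_of_nonneg_right h1 hsa0
        refine this.trans ?_
        have h2 : 0 ≤ |c₀| * cmax * cmin ^ (-γ) * cmin ^ ν * (((t - a) / 2) ^ ν * (t - s) ^ (-γ)) := by
          positivity
        linarith
      · have h1 : (s - a) ^ ν ≤ ((t - a) / 2) ^ ν :=
          Real.rpow_le_rpow_of_nonpos hhalf (by linarith) hν0.le
        have : |c₀| * cmax * cmin ^ (-γ) * cmin ^ ν * ((t - s) ^ (-γ) * (s - a) ^ ν) ≤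
            |c₀| * cmax * cmin ^ (-γ) * cmin ^ ν * (((t - a) / 2) ^ ν * (t - s) ^ (-γ)) := by
          apply mul_le_mul_of_nonneg_left _ (by positivity)
          calc (t - s) ^ (-γ) * (s - a) ^ ν ≤ (t - s) ^ (-γ) * ((t - a) / 2) ^ ν :=
                mul_le_mul_of_nonneg_left h1 hts0
            _ = ((t - a) / 2) ^ ν * (t - s) ^ (-γ) := by ring
        refine this.trans ?_
        have h2 : 0 ≤ |c₀| * cmax * cmin ^ (-γ) * cmin ^ ν * (((t - a) / 2) ^ (-γ) * (s - a) ^ ν) := by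
          positivity
        linarith
    -- integrability of g pieces
    have hint1 : IntervalIntegrable (fun s : ℝ => (s - a) ^ ν) volume a t := by
      have := (intervalIntegral.intervalIntegrable_rpow' hν1 (a := 0) (b := t - a)).comp_sub_right a
      simpa using this
    have hint2 : IntervalIntegrable (fun s : ℝ => (t - s) ^ (-γ)) volume a t := by
      have := (intervalIntegral.intervalIntegrable_rpow' (show (-1 : ℝ) < -γ by linarith)
        (a := t - a) (b := 0)).comp_sub_left t
      simpa using this
    have hint1' : IntervalIntegrable (fun s : ℝ => ((t - a) / 2) ^ (-γ) * (s - a) ^ ν) volume a t :=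
      hint1.const_mul _
    have hint2' : IntervalIntegrable (fun s : ℝ => ((t - a) / 2) ^ ν * (t - s) ^ (-γ)) volume a t :=
      hint2.const_mul _
    have hintg : IntervalIntegrable g volume a t := by
      rw [hg]
      exact (hint1'.add hint2').const_mul K
    -- the norm bound via comparison
    have hnorm : ‖∫ s in a..t, f s‖ ≤ |∫ s in a..t, g s| := by
      apply intervalIntegral.norm_integral_le_abs_of_norm_le _ hintg
      rw [uIoc_of_le hat.le]
      rw [MeasureTheory.ae_restrict_iff' measurableSet_Ioc]
      exact MeasureTheory.ae_of_all _ fun s hs => by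
        simpa [Real.norm_eq_abs] using hbd s hs
    -- compute ∫ g
    have hI1 : ∫ s in a..t, (s - a) ^ ν = (t - a) ^ (ν + 1) / (ν + 1) := by
      rw [intervalIntegral.integral_comp_sub_right (fun u : ℝ => u ^ ν) a, sub_self,
        integral_rpow (Or.inl hν1), Real.zero_rpow (by linarith : ν + 1 ≠ 0)]
      ring
    have hI2 : ∫ s in a..t, (t - s) ^ (-γ) = (t - a) ^ (1 - γ) / (1 - γ) := by
      rw [intervalIntegral.integral_comp_sub_left (fun u : ℝ => u ^ (-γ)) t, sub_self,
        integral_rpow (Or.inl (show (-1 : ℝ) < -γ by linarith)),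
        Real.zero_rpow (by linarith : -γ + 1 ≠ 0), show -γ + 1 = 1 - γ by ring]
      ring
    have hIg : ∫ s in a..t, g s =
        K * (((t - a) / 2) ^ (-γ) * ((t - a) ^ (ν + 1) / (ν + 1)) +
          ((t - a) / 2) ^ ν * ((t - a) ^ (1 - γ) / (1 - γ))) := by
      simp only [hg]
      rw [intervalIntegral.integral_const_mul, intervalIntegral.integral_add hint1' hint2',
        intervalIntegral.integral_const_mul, intervalIntegral.integral_const_mul, hI1, hI2]
    -- algebra
    have e1 : ((t - a) / 2) ^ (-γ) * (t - a) ^ (ν + 1) = (2 : ℝ) ^ γ * (t - a) ^ p := by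
      rw [Real.div_rpow hε.le (by norm_num : (0 : ℝ) ≤ 2), div_mul_eq_mul_div,
        ← Real.rpow_add hε, show -γ + (ν + 1) = p by rw [hpdef]; ring,
        Real.rpow_neg (by norm_num : (0 : ℝ) ≤ 2), div_inv_eq_mul]
      ring
    have e2 : ((t - a) / 2) ^ ν * (t - a) ^ (1 - γ) = (t - a) ^ p / (2 : ℝ) ^ ν := by
      rw [Real.div_rpow hε.le (by norm_num : (0 : ℝ) ≤ 2), div_mul_eq_mul_div,
        ← Real.rpow_add hε, show ν + (1 - γ) = p by rw [hpdef]; ring]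
    have hIgval : ∫ s in a..t, g s = K * ((2 : ℝ) ^ γ / (ν + 1) + ((2 : ℝ) ^ ν)⁻¹ / (1 - γ)) *
        (t - a) ^ p := by
      rw [hIg, ← mul_div_assoc, ← mul_div_assoc, e1, e2]
      field_simp
    have hIg0 : 0 ≤ ∫ s in a..t, g s := by
      rw [hIgval]
      have h2γ : 0 ≤ (2 : ℝ) ^ γ := Real.rpow_nonneg (by norm_num) _
      have h2ν : 0 ≤ ((2 : ℝ) ^ ν)⁻¹ := by positivity
      have hεp : 0 ≤ (t - a) ^ p := Real.rpow_nonneg hε.le _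
      positivity
    -- conclude
    have : ‖katI ρ (1 - γ) a (fun u => c₀ * ((u ^ ρ - a ^ ρ) / ρ) ^ ν) t‖ =
        c₁ * ‖∫ s in a..t, f s‖ := by
      rw [katI, Real.norm_eq_abs, Real.norm_eq_abs, abs_mul, hc₁]
    rw [hc₀] at this
    rw [this]
    calc c₁ * ‖∫ s in a..t, f s‖ ≤ c₁ * |∫ s in a..t, g s| :=
          mul_le_mul_of_nonneg_left hnorm hc₁0
      _ = c₁ * (∫ s in a..t, g s) := by rw [abs_of_nonneg hIg0]
      _ = C * (t - a) ^ p := by rw [hIgval, hC]; ring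
  · -- tendsto of the bound
    have h1 : Tendsto (fun t : ℝ => t - a) (nhdsWithin a (Set.Ioi a)) (nhds 0) := by
      have h0 : Tendsto (fun t : ℝ => t - a) (nhds a) (nhds (a - a)) :=
        (continuous_id.sub continuous_const).tendsto a
      rw [sub_self] at h0
      exact h0.mono_left nhdsWithin_le_nhds
    have h2 : Tendsto (fun x : ℝ => x ^ p) (nhds 0) (nhds 0) := by
      have := (Real.continuousAt_rpow_const 0 p (Or.inr hp.le)).tendsto
      rwa [Real.zero_rpow hp.ne'] at this
    have h3 := (h2.comp h1).const_mul C
    simpa using h3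
end
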